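/- arXiv:2511.02789 — 3 statements merged into one kernel-verified Lean document; each statement's English description precedes it below -/
import Mathlib

section
/- A family 𝒞 of axis-parallel rectangles in ℝ² is Λ-Carleson (meaning Σ_{R∈𝒞, R⊆Ω} |R| ≤ Λ|Ω| for every open set Ω of finite measure) if and only if it is η-sparse with η = Λ^{-1}, i.e., there exist pairwise disjoint measurable sets E_R ⊂ R with |E_R| ≥ Λ^{-1}|R|. (It suffices to prove the statement for finite families 𝒞.) -/
open MeasureTheory Set Filter Topology
open scoped ENNReal Classical

noncomputable section

/-- The dyadic interval `[n·2^k, (n+1)·2^k)`, indexed by `p = (k, n)`. -/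
def dyadicI (p : ℤ × ℤ) : Set ℝ := Set.Ico ((p.2 : ℝ) * 2 ^ p.1) ((p.2 + 1 : ℝ) * 2 ^ p.1)

/-- The length `|I| = 2^k` of the dyadic interval indexed by `p = (k, n)`. -/
def dlen (p : ℤ × ℤ) : ℝ := (2 : ℝ) ^ p.1

/-- The `L²`-normalized Haar function of the dyadic interval indexed by `p = (k, n)`. -/
def haar (p : ℤ × ℤ) (x : ℝ) : ℝ :=
  (2 : ℝ) ^ (-(p.1 : ℝ) / 2) *
    ((dyadicI (p.1 - 1, 2 * p.2)).indicator 1 x - (dyadicI (p.1 - 1, 2 * p.2 + 1)).indicator 1 x)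

/-- The normalized indicator `χ_I/|I|`. -/
def nind (p : ℤ × ℤ) (x : ℝ) : ℝ := (dlen p)⁻¹ * (dyadicI p).indicator 1 x

/-- Index of a dyadic rectangle `R = I × J`. -/
abbrev RectIx : Type := (ℤ × ℤ) × (ℤ × ℤ)

/-- The dyadic rectangle `I × J`. -/
def dyadicR (r : RectIx) : Set (ℝ × ℝ) := (dyadicI r.1) ×ˢ (dyadicI r.2)

/-- The area `|R| = |I|·|J|`. -/
def rlen (r : RectIx) : ℝ := dlen r.1 * dlen r.2

/-- The rectangular Haar function `h_R = h_I ⊗ h_J`. -/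
def haarR (r : RectIx) (z : ℝ × ℝ) : ℝ := haar r.1 z.1 * haar r.2 z.2

/-- The rectangular Haar coefficient `f_R = ⟨f, h_R⟩`. -/
def haarCoefR (f : ℝ × ℝ → ℝ) (r : RectIx) : ℝ := ∫ z : ℝ × ℝ, f z * haarR r z

/-- The average of `g` over the dyadic rectangle `R`. -/
def avgR (g : ℝ × ℝ → ℝ) (r : RectIx) : ℝ := (rlen r)⁻¹ * ∫ z in dyadicR r, g z

/-- The average of `u` over the dyadic interval `I`. -/
def avgI (u : ℝ → ℝ) (p : ℤ × ℤ) : ℝ := (dlen p)⁻¹ * ∫ x in dyadicI p, u x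

/-- The Haar coefficient in the second variable, `f_J(x) = ⟨f(x,·), h_J⟩`. -/
def coefSnd (f : ℝ × ℝ → ℝ) (q : ℤ × ℤ) (x : ℝ) : ℝ := ∫ y : ℝ, f (x, y) * haar q y

/-- The Haar coefficient in the first variable, `f_I(y) = ⟨f(·,y), h_I⟩`. -/
def coefFst (f : ℝ × ℝ → ℝ) (p : ℤ × ℤ) (y : ℝ) : ℝ := ∫ x : ℝ, f (x, y) * haar p x

/-- The bi-parameter dyadic square function. -/
def sqR (f : ℝ × ℝ → ℝ) (z : ℝ × ℝ) : ℝ :=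
  Real.sqrt (∑' r : RectIx, (haarCoefR f r) ^ 2 * (rlen r)⁻¹ * (dyadicR r).indicator 1 z)

/-- The strong dyadic maximal function. -/
def strongMax (g : ℝ × ℝ → ℝ) (z : ℝ × ℝ) : ℝ :=
  ⨆ r : {r : RectIx // z ∈ dyadicR r}, |avgR g r.1|

/-- The one-parameter dyadic maximal function. -/
def dyadMax (u : ℝ → ℝ) (x : ℝ) : ℝ := ⨆ p : {p : ℤ × ℤ // x ∈ dyadicI p}, |avgI u p.1|

/-- `f` is a finite linear combination of indicators of dyadic intervals. -/
def IsDyadicSimple (f : ℝ → ℝ) : Prop :=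
  ∃ (s : Finset (ℤ × ℤ)) (c : ℤ × ℤ → ℝ),
    f = fun x => ∑ p ∈ s, c p * (dyadicI p).indicator 1 x

/-- `g` is a finite linear combination of indicators of dyadic rectangles. -/
def IsDyadicSimple2 (g : ℝ × ℝ → ℝ) : Prop :=
  ∃ (s : Finset RectIx) (c : RectIx → ℝ),
    g = fun z => ∑ r ∈ s, c r * (dyadicR r).indicator 1 z

/-- `f` is a finite linear combination of rectangular Haar functions. -/
def FinHaar2 (f : ℝ × ℝ → ℝ) : Prop :=
  ∃ (s : Finset RectIx) (c : RectIx → ℝ), f = fun z => ∑ r ∈ s, c r * haarR r z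

/-- The paraproduct `π²_g(f) = Σ_R f_R ⟨g⟩_R h_R`. -/
def pi2 (g f : ℝ × ℝ → ℝ) (z : ℝ × ℝ) : ℝ :=
  ∑' r : RectIx, haarCoefR f r * avgR g r * haarR r z

/-- The mixed paraproduct `π³_g(f) = Σ_{I,J} ⟨f_J⟩_I ⟨g_I⟩_J h_I ⊗ h_J`. -/
def pi3 (g f : ℝ × ℝ → ℝ) (z : ℝ × ℝ) : ℝ :=
  ∑' r : RectIx, avgI (coefSnd f r.2) r.1 * avgI (coefFst g r.1) r.2 * haarR r z

/-- The mixed paraproduct `π⁴_g(f) = Σ_{I,J} ⟨f_J⟩_I g_{I×J} h_I ⊗ χ̄_J`. -/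
def pi4 (g f : ℝ × ℝ → ℝ) (z : ℝ × ℝ) : ℝ :=
  ∑' r : RectIx, avgI (coefSnd f r.2) r.1 * haarCoefR g r * haar r.1 z.1 * nind r.2 z.2

/-- The mixed square-maximal operator `S₂M₁`. -/
def S2M1 (f : ℝ × ℝ → ℝ) (z : ℝ × ℝ) : ℝ :=
  Real.sqrt (∑' q : ℤ × ℤ,
    (dyadMax (coefSnd f q) z.1) ^ 2 * (dlen q)⁻¹ * (dyadicI q).indicator 1 z.2)

/-- The mixed maximal-square operator `M₂S₁`. -/
def M2S1 (g : ℝ × ℝ → ℝ) (z : ℝ × ℝ) : ℝ :=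
  ⨆ q : {q : ℤ × ℤ // z.2 ∈ dyadicI q},
    Real.sqrt (∑' p : ℤ × ℤ,
      (avgI (coefFst g p) q.1) ^ 2 * (dlen p)⁻¹ * (dyadicI p).indicator 1 z.1)

/-- The mixed maximal-square operator `M₁S₂`. -/
def M1S2 (f : ℝ × ℝ → ℝ) (z : ℝ × ℝ) : ℝ :=
  ⨆ p : {p : ℤ × ℤ // z.1 ∈ dyadicI p},
    Real.sqrt (∑' q : ℤ × ℤ,
      (avgI (coefSnd f q) p.1) ^ 2 * (dlen q)⁻¹ * (dyadicI q).indicator 1 z.2)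

/-- The `H^p_d(ℝ⊗ℝ)` quasi-norm `‖M(f)‖_{L^p}`. -/
def hpNorm (p : ℝ) (f : ℝ × ℝ → ℝ) : ℝ≥0∞ :=
  eLpNorm (strongMax f) (ENNReal.ofReal p) volume


/-- An axis-parallel rectangle `[a,b) × [c,d)` in the plane, indexed by `((a,b),(c,d))`. -/
def rset (r : (ℝ × ℝ) × (ℝ × ℝ)) : Set (ℝ × ℝ) := (Set.Ico r.1.1 r.1.2) ×ˢ (Set.Ico r.2.1 r.2.2)


variable {ι σσ : Type*}

lemma exists_Iio_measure_eq (ν : Measure ℝ) [IsFiniteMeasure ν] (hna : ∀ x : ℝ, ν {x} = 0)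
    {c : ℝ≥0∞} (hc0 : 0 < c) (hctop : c < ν univ) : ∃ τ : ℝ, ν (Iio τ) = c := by
  have gmono : Monotone (fun t : ℝ => ν (Iio t)) := fun a b hab => measure_mono (Iio_subset_Iio hab)
  have hlow : ∃ a : ℝ, ν (Iio a) ≤ c := by
    have h1 : Tendsto (fun n : ℕ => ν (Iio (-(n:ℝ)))) atTop (𝓝 (ν (⋂ n : ℕ, Iio (-(n:ℝ))))) := by
      apply tendsto_measure_iInter_atTop (fun n => measurableSet_Iio.nullMeasurableSet)
      · intro m n hmn
        exact Iio_subset_Iio (neg_le_neg (by exact_mod_cast hmn))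
      · exact ⟨0, measure_ne_top ν _⟩
    have h2 : (⋂ n : ℕ, Iio (-(n:ℝ))) = ∅ := by
      ext x; simp only [mem_iInter, mem_Iio, mem_empty_iff_false, iff_false, not_forall, not_lt]
      obtain ⟨n, hn⟩ := exists_nat_ge (-x)
      exact ⟨n, by linarith⟩
    rw [h2, measure_empty] at h1
    obtain ⟨n, hn⟩ := (h1.eventually_lt_const hc0).exists
    exact ⟨-(n:ℝ), hn.le⟩
  have hup : ∃ b : ℝ, c < ν (Iio b) := by
    have h1 : Tendsto (fun n : ℕ => ν (Iio (n:ℝ))) atTop (𝓝 (ν (⋃ n : ℕ, Iio (n:ℝ)))) := by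
      apply tendsto_measure_iUnion_atTop
      intro m n hmn
      exact Iio_subset_Iio (by exact_mod_cast hmn)
    have h2 : (⋃ n : ℕ, Iio (n:ℝ)) = univ := by
      ext x; simp only [mem_iUnion, mem_Iio, mem_univ, iff_true]
      obtain ⟨n, hn⟩ := exists_nat_gt x
      exact ⟨n, hn⟩
    rw [h2] at h1
    obtain ⟨n, hn⟩ := (h1.eventually_const_lt hctop).exists
    exact ⟨(n:ℝ), hn⟩
  obtain ⟨a, ha⟩ := hlow
  obtain ⟨b, hb⟩ := hup
  have hTne : {t : ℝ | ν (Iio t) ≤ c}.Nonempty := ⟨a, ha⟩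
  have hTbdd : BddAbove {t : ℝ | ν (Iio t) ≤ c} := by
    refine ⟨b, fun t ht => ?_⟩
    by_contra hbt
    push_neg at hbt
    exact absurd (le_trans (gmono hbt.le) ht) (not_le.mpr hb)
  set τ := sSup {t : ℝ | ν (Iio t) ≤ c} with hτ
  have hlt : ∀ t < τ, ν (Iio t) ≤ c := by
    intro t ht
    obtain ⟨t', ht', htt'⟩ := exists_lt_of_lt_csSup hTne ht
    exact le_trans (gmono htt'.le) ht'
  have hgt : ∀ t, τ < t → c < ν (Iio t) := by
    intro t ht
    by_contra hle
    push_neg at hle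
    exact absurd (le_csSup hTbdd hle) (not_le.mpr ht)
  have hdiv : ∀ m n : ℕ, m ≤ n → (1:ℝ)/(n+1) ≤ 1/(m+1) := by
    intro m n hmn
    apply one_div_le_one_div_of_le (by positivity)
    have : (m:ℝ) ≤ n := by exact_mod_cast hmn
    linarith
  refine ⟨τ, le_antisymm ?_ ?_⟩
  · have hU : Iio τ = ⋃ n : ℕ, Iio (τ - 1/(n+1)) := by
      ext x
      simp only [mem_iUnion, mem_Iio]
      constructor
      · intro hx
        obtain ⟨n, hn⟩ := exists_nat_one_div_lt (sub_pos.mpr hx)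
        exact ⟨n, by linarith⟩
      · rintro ⟨n, hn⟩
        have : (0:ℝ) < 1/(n+1) := by positivity
        linarith
    rw [hU, Directed.measure_iUnion]
    · refine iSup_le fun n => hlt _ ?_
      have : (0:ℝ) < 1/(n+1) := by positivity
      linarith
    · exact Monotone.directed_le fun m n hmn => Iio_subset_Iio (by linarith [hdiv m n hmn])
  · have hI : Iic τ = ⋂ n : ℕ, Iio (τ + 1/(n+1)) := by
      ext x
      simp only [mem_iInter, mem_Iio, mem_Iic]
      constructor
      · intro hx n
        have : (0:ℝ) < 1/(n+1) := by positivity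
        linarith
      · intro h
        by_contra hx
        push_neg at hx
        obtain ⟨n, hn⟩ := exists_nat_one_div_lt (sub_pos.mpr hx)
        have := h n
        linarith
    have h1 : Tendsto (fun n : ℕ => ν (Iio (τ + 1/(n+1)))) atTop (𝓝 (ν (Iic τ))) := by
      rw [hI]
      apply tendsto_measure_iInter_atTop (fun n => measurableSet_Iio.nullMeasurableSet)
      · intro m n hmn
        exact Iio_subset_Iio (by linarith [hdiv m n hmn])
      · exact ⟨0, measure_ne_top ν _⟩
    have h2 : ν (Iic τ) = ν (Iio τ) := by
      have he : Iic τ = Iio τ ∪ {τ} := by ext x; simp [le_iff_lt_or_eq]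
      rw [he]
      refine le_antisymm (le_trans (measure_union_le _ _) ?_) (measure_mono subset_union_left)
      rw [hna τ, add_zero]
    rw [h2] at h1
    refine ge_of_tendsto h1 (Eventually.of_forall fun n => ?_)
    refine (hgt _ ?_).le
    have : (0:ℝ) < 1/(n+1) := by positivity
    linarith

lemma exists_subset_volume_eq {A : Set (ℝ × ℝ)} (hA : MeasurableSet A)
    (hfin : volume A ≠ ⊤) {c : ℝ≥0∞} (hc : c ≤ volume A) :
    ∃ E : Set (ℝ × ℝ), E ⊆ A ∧ MeasurableSet E ∧ volume E = c := by
  rcases eq_or_lt_of_le (bot_le : 0 ≤ c) with h0 | h0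
  · exact ⟨∅, empty_subset _, MeasurableSet.empty, by simp [← h0]⟩
  rcases eq_or_lt_of_le hc with hceq | hclt
  · exact ⟨A, subset_rfl, hA, hceq.symm⟩
  set ν : Measure ℝ := Measure.map Prod.fst (volume.restrict A) with hν
  have hνapp : ∀ s : Set ℝ, MeasurableSet s → ν s = volume (A ∩ Prod.fst ⁻¹' s) := by
    intro s hs
    rw [hν, Measure.map_apply measurable_fst hs, Measure.restrict_apply (measurable_fst hs)]
    rw [inter_comm]
  have hνuniv : ν univ = volume A := by
    rw [hνapp univ MeasurableSet.univ]; simp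
  have : IsFiniteMeasure ν := ⟨by rw [hνuniv]; exact hfin.lt_top⟩
  have hna : ∀ x : ℝ, ν {x} = 0 := by
    intro x
    rw [hνapp {x} (measurableSet_singleton x)]
    refine measure_mono_null (inter_subset_right) ?_
    have : (Prod.fst ⁻¹' {x} : Set (ℝ × ℝ)) = {x} ×ˢ univ := by
      ext ⟨a, b⟩
      simp [eq_comm]
    rw [this, Measure.volume_eq_prod, Measure.prod_prod]
    simp
  obtain ⟨τ, hτ⟩ := exists_Iio_measure_eq ν hna h0 (by rw [hνuniv]; exact hclt)
  refine ⟨A ∩ Prod.fst ⁻¹' Iio τ, inter_subset_left,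
    hA.inter (measurable_fst measurableSet_Iio), ?_⟩
  rw [← hνapp _ measurableSet_Iio, hτ]

/-- Cake cutting: disjoint measurable subsets of prescribed measures. -/
lemma cake_cutting {ι : Type*} (s : Finset ι) :
    ∀ (A : Set (ℝ × ℝ)), MeasurableSet A → volume A ≠ ⊤ →
    ∀ (c : ι → ℝ≥0∞), (∑ i ∈ s, c i) ≤ volume A →
    ∃ F : ι → Set (ℝ × ℝ), (∀ i, F i ⊆ A) ∧ (∀ i, MeasurableSet (F i)) ∧
      (∀ i ∈ s, volume (F i) = c i) ∧
      (∀ i ∈ s, ∀ j ∈ s, i ≠ j → Disjoint (F i) (F j)) := by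
  induction s using Finset.cons_induction with
  | empty =>
    intro A hA hfin c _
    exact ⟨fun _ => ∅, fun _ => empty_subset _, fun _ => MeasurableSet.empty,
      fun i hi => absurd hi (Finset.notMem_empty i), fun i hi => absurd hi (Finset.notMem_empty i)⟩
  | cons i₀ s hi₀ ih =>
    intro A hA hfin c hsum
    rw [Finset.sum_cons] at hsum
    have hci₀ : c i₀ ≤ volume A := le_trans (le_add_right le_rfl) hsum
    obtain ⟨E, hEA, hEm, hEvol⟩ := exists_subset_volume_eq hA hfin hci₀
    have hrest : (∑ i ∈ s, c i) ≤ volume (A \ E) := by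
      have h1 : volume A ≤ volume (A \ E) + volume E := by
        refine le_trans (measure_mono (?_ : A ⊆ (A \ E) ∪ E)) (measure_union_le _ _)
        intro x hx
        by_cases hxE : x ∈ E
        · exact Or.inr hxE
        · exact Or.inl ⟨hx, hxE⟩
      rw [hEvol] at h1
      have h2 : (∑ i ∈ s, c i) ≤ volume A - c i₀ :=
        ENNReal.le_sub_of_add_le_left (ne_top_of_le_ne_top hfin hci₀) hsum
      refine le_trans h2 ?_
      have := tsub_le_tsub_right h1 (c i₀)
      rwa [ENNReal.add_sub_cancel_right (ne_top_of_le_ne_top hfin hci₀)] at this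
    obtain ⟨F, hFA, hFm, hFvol, hFdisj⟩ := ih (A \ E) (hA.diff hEm)
      (fun h => hfin (top_le_iff.mp (h ▸ measure_mono diff_subset))) c hrest
    refine ⟨fun j => if j = i₀ then E else F j, ?_, ?_, ?_, ?_⟩
    · intro j
      by_cases hj : j = i₀
      · simpa [hj] using hEA
      · simpa [hj] using (hFA j).trans diff_subset
    · intro j
      by_cases hj : j = i₀
      · simpa [hj] using hEm
      · simpa [hj] using hFm j
    · intro j hj
      rcases Finset.mem_cons.mp hj with hj | hj
      · simp [hj, hEvol]
      · have : j ≠ i₀ := fun h => hi₀ (h ▸ hj)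
        simp only [if_neg this]
        exact hFvol j hj
    · intro j hj k hk hjk
      rcases Finset.mem_cons.mp hj with hj' | hj' <;> rcases Finset.mem_cons.mp hk with hk' | hk'
      · exact absurd (hj'.trans hk'.symm) hjk
      · have hk2 : k ≠ i₀ := fun h => hi₀ (h ▸ hk')
        simp only [hj', if_pos rfl, if_neg hk2]
        exact Disjoint.mono_right (hFA k) disjoint_sdiff_right
      · have hj2 : j ≠ i₀ := fun h => hi₀ (h ▸ hj')
        simp only [hk', if_neg hj2, if_pos rfl]
        exact (Disjoint.mono_right (hFA j) disjoint_sdiff_right).symm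
      · have h1 : j ≠ i₀ := fun h => hi₀ (h ▸ hj')
        have h2 : k ≠ i₀ := fun h => hi₀ (h ▸ hk')
        simp only [if_neg h1, if_neg h2]
        exact hFdisj j hj' k hk' hjk

lemma greedy_fill {σσ : Type*} (B : Finset σσ) :
    ∀ (s : σσ → ℝ) (d : ℝ), (∀ t ∈ B, 0 ≤ s t) → 0 ≤ d → d ≤ ∑ t ∈ B, s t →
    ∃ u : σσ → ℝ, (∀ t, 0 ≤ u t) ∧ (∀ t ∈ B, u t ≤ s t) ∧ (∀ t, t ∉ B → u t = 0) ∧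
      ∑ t ∈ B, u t = d := by
  induction B using Finset.cons_induction with
  | empty =>
    intro s d _ hd hsum
    simp only [Finset.sum_empty] at hsum
    have hd0 : d = 0 := le_antisymm hsum hd
    exact ⟨fun _ => 0, fun _ => le_rfl, fun t ht => absurd ht (Finset.notMem_empty t),
      fun _ _ => rfl, by simp [hd0]⟩
  | cons t₀ B ht₀ ih =>
    intro s d hs hd hsum
    rw [Finset.sum_cons] at hsum
    have hs0 : (0:ℝ) ≤ s t₀ := hs t₀ (Finset.mem_cons_self _ _)
    have hsB : ∀ t ∈ B, 0 ≤ s t := fun t ht => hs t (Finset.mem_cons_of_mem ht)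
    have hd' : 0 ≤ d - min (s t₀) d := by
      rcases min_cases (s t₀) d with ⟨h1, h2⟩ | ⟨h1, h2⟩ <;> rw [h1] <;> linarith
    have hsum' : d - min (s t₀) d ≤ ∑ t ∈ B, s t := by
      rcases min_cases (s t₀) d with ⟨h1, h2⟩ | ⟨h1, h2⟩ <;> rw [h1]
      · linarith
      · simp only [sub_self]
        exact Finset.sum_nonneg hsB
    obtain ⟨u, hu0, hus, huB, husum⟩ := ih s (d - min (s t₀) d) hsB hd' hsum'
    refine ⟨Function.update u t₀ (min (s t₀) d), ?_, ?_, ?_, ?_⟩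
    · intro t
      by_cases ht : t = t₀
      · subst ht; rw [Function.update_self]; exact le_min hs0 hd
      · rw [Function.update_of_ne ht]; exact hu0 t
    · intro t ht
      by_cases h : t = t₀
      · subst h; rw [Function.update_self]; exact min_le_left _ _
      · rw [Function.update_of_ne h]
        exact hus t ((Finset.mem_cons.mp ht).resolve_left h)
    · intro t ht
      have h1 : t ≠ t₀ := fun h => ht (h ▸ Finset.mem_cons_self _ _)
      rw [Function.update_of_ne h1]
      exact huB t (fun h => ht (Finset.mem_cons_of_mem h))
    · rw [Finset.sum_cons, Function.update_self]
      have : ∀ t ∈ B, Function.update u t₀ (min (s t₀) d) t = u t := by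
        intro t ht
        exact Function.update_of_ne (fun h : t = t₀ => ht₀ (h ▸ ht)) _ _
      rw [Finset.sum_congr rfl this, husum]
      ring

variable {ι σσ : Type*}



/-- Neighborhood of a set of indices in the bipartite supply graph. -/
def sparseNB (P : ι → σσ → Prop) (B : Finset σσ) (S : Finset ι) : Finset σσ :=
  B.filter (fun t => ∃ i ∈ S, P i t)

lemma mem_sparseNB {P : ι → σσ → Prop} {B : Finset σσ} {S : Finset ι} {t : σσ} :
    t ∈ sparseNB P B S ↔ t ∈ B ∧ ∃ i ∈ S, P i t := Finset.mem_filter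

lemma sparseNB_subset {P : ι → σσ → Prop} {B : Finset σσ} {S : Finset ι} :
    sparseNB P B S ⊆ B := Finset.filter_subset _ _

lemma sparseNB_mono {P : ι → σσ → Prop} {B : Finset σσ} {S S' : Finset ι} (h : S ⊆ S') :
    sparseNB P B S ⊆ sparseNB P B S' := by
  intro t ht
  rw [mem_sparseNB] at ht ⊢
  obtain ⟨htB, i, hi, hPi⟩ := ht
  exact ⟨htB, i, h hi, hPi⟩

lemma sparseNB_union {P : ι → σσ → Prop} {B : Finset σσ} {S S' : Finset ι} :
    sparseNB P B (S ∪ S') = sparseNB P B S ∪ sparseNB P B S' := by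
  ext t
  simp only [mem_sparseNB, Finset.mem_union]
  constructor
  · rintro ⟨htB, i, hi | hi, hPi⟩
    · exact Or.inl ⟨htB, i, hi, hPi⟩
    · exact Or.inr ⟨htB, i, hi, hPi⟩
  · rintro (⟨htB, i, hi, hPi⟩ | ⟨htB, i, hi, hPi⟩)
    · exact ⟨htB, i, Or.inl hi, hPi⟩
    · exact ⟨htB, i, Or.inr hi, hPi⟩

/-- `x` is a valid allocation for supplies `s` on `B` and demands `d` on `A`. -/
def IsAlloc (P : ι → σσ → Prop) (A : Finset ι) (B : Finset σσ) (s : σσ → ℝ) (d : ι → ℝ)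
    (x : ι → σσ → ℝ) : Prop :=
  (∀ i t, 0 ≤ x i t) ∧ (∀ i t, x i t ≠ 0 → i ∈ A ∧ t ∈ B ∧ P i t) ∧
    (∀ i ∈ A, ∑ t ∈ B, x i t = d i) ∧ (∀ t ∈ B, ∑ i ∈ A, x i t ≤ s t)

/-- The Hall condition for the fractional marriage problem. -/
def HallCond (P : ι → σσ → Prop) (A : Finset ι) (B : Finset σσ) (s : σσ → ℝ) (d : ι → ℝ) :
    Prop :=
  ∀ S : Finset ι, S ⊆ A → ∑ i ∈ S, d i ≤ ∑ t ∈ sparseNB P B S, s t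

lemma sum_update_sub {s : σσ → ℝ} {T : Finset σσ} {t₀ : σσ} (h : t₀ ∈ T) (m : ℝ) :
    ∑ t ∈ T, Function.update s t₀ (s t₀ - m) t = (∑ t ∈ T, s t) - m := by
  rw [Finset.sum_update_of_mem h, Finset.sdiff_singleton_eq_erase, ← Finset.add_sum_erase _ s h]
  ring

lemma sum_update_of_not_mem' {s : σσ → ℝ} {T : Finset σσ} {t₀ : σσ} (h : t₀ ∉ T) (v : ℝ) :
    ∑ t ∈ T, Function.update s t₀ v t = ∑ t ∈ T, s t :=
  Finset.sum_congr rfl fun t ht => Function.update_of_ne (fun he : t = t₀ => h (he ▸ ht)) _ _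

/-- Adding back an assignment of mass `m` along the edge `(i₀, t₀)`. -/
lemma alloc_addback {P : ι → σσ → Prop} {A : Finset ι} {B : Finset σσ} {s : σσ → ℝ} {d : ι → ℝ}
    {i₀ : ι} {t₀ : σσ} (hi₀ : i₀ ∈ A) (ht₀ : t₀ ∈ B) (hP : P i₀ t₀) {m : ℝ} (hm : 0 ≤ m)
    {x' : ι → σσ → ℝ}
    (h : IsAlloc P A B (Function.update s t₀ (s t₀ - m)) (Function.update d i₀ (d i₀ - m)) x') :
    ∃ x, IsAlloc P A B s d x := by
  obtain ⟨h0, hsupp, hrow, hcol⟩ := h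
  refine ⟨fun i t => (if i = i₀ ∧ t = t₀ then m else 0) + x' i t, ?_, ?_, ?_, ?_⟩
  · intro i t
    dsimp only
    have := h0 i t
    by_cases hit : i = i₀ ∧ t = t₀
    · rw [if_pos hit]
      linarith
    · rw [if_neg hit, zero_add]
      exact this
  · intro i t hne
    dsimp only at hne
    by_cases hit : i = i₀ ∧ t = t₀
    · exact ⟨hit.1 ▸ hi₀, hit.2 ▸ ht₀, hit.1 ▸ hit.2 ▸ hP⟩
    · rw [if_neg hit, zero_add] at hne
      exact hsupp i t hne
  · intro i hi
    dsimp only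
    rw [Finset.sum_add_distrib]
    by_cases hii : i = i₀
    · have h1 : ∑ t ∈ B, (if i = i₀ ∧ t = t₀ then m else 0) = m := by
        simp only [hii, true_and]
        rw [Finset.sum_ite_eq' B t₀ (fun _ => m)]
        exact if_pos ht₀
      have h2 := hrow i hi
      rw [hii, Function.update_self] at h2
      rw [h1, hii, h2]
      ring
    · have h1 : ∑ t ∈ B, (if i = i₀ ∧ t = t₀ then m else 0) = 0 :=
        Finset.sum_eq_zero fun t _ => if_neg (fun hc => hii hc.1)
      have h2 := hrow i hi
      rw [Function.update_of_ne hii] at h2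
      rw [h1, h2, zero_add]
  · intro t ht
    dsimp only
    rw [Finset.sum_add_distrib]
    by_cases htt : t = t₀
    · have h1 : ∑ i ∈ A, (if i = i₀ ∧ t = t₀ then m else 0) = m := by
        simp only [htt, and_true]
        rw [Finset.sum_ite_eq' A i₀ (fun _ => m)]
        exact if_pos hi₀
      have h2 := hcol t ht
      rw [htt, Function.update_self] at h2
      rw [h1, htt]
      linarith [h2]
    · have h1 : ∑ i ∈ A, (if i = i₀ ∧ t = t₀ then m else 0) = 0 :=
        Finset.sum_eq_zero fun i _ => if_neg (fun hc => htt hc.2)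
      have h2 := hcol t ht
      rw [Function.update_of_ne htt] at h2
      rw [h1, zero_add]
      exact h2

lemma hall_update {P : ι → σσ → Prop} {A : Finset ι} {B : Finset σσ} {s : σσ → ℝ} {d : ι → ℝ}
    {i₀ : ι} {t₀ : σσ} (hi₀ : i₀ ∈ A) (ht₀ : t₀ ∈ B) (hP : P i₀ t₀) {m : ℝ}
    (hall : HallCond P A B s d)
    (hkey : ∀ S : Finset ι, S ⊆ A → i₀ ∉ S → t₀ ∈ sparseNB P B S →
      (∑ i ∈ S, d i) + m ≤ ∑ t ∈ sparseNB P B S, s t) :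
    HallCond P A B (Function.update s t₀ (s t₀ - m)) (Function.update d i₀ (d i₀ - m)) := by
  intro S hS
  by_cases hiS : i₀ ∈ S
  · have ht : t₀ ∈ sparseNB P B S := mem_sparseNB.mpr ⟨ht₀, i₀, hiS, hP⟩
    have hD : ∑ i ∈ S, Function.update d i₀ (d i₀ - m) i = (∑ i ∈ S, d i) - m := by
      rw [Finset.sum_update_of_mem hiS, Finset.sdiff_singleton_eq_erase,
        ← Finset.add_sum_erase _ d hiS]
      ring
    rw [hD, sum_update_sub ht]
    linarith [hall S hS]
  · have hD : ∑ i ∈ S, Function.update d i₀ (d i₀ - m) i = ∑ i ∈ S, d i :=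
      Finset.sum_congr rfl fun i hi => Function.update_of_ne (fun he : i = i₀ => hiS (he ▸ hi)) _ _
    rw [hD]
    by_cases ht : t₀ ∈ sparseNB P B S
    · rw [sum_update_sub ht]
      linarith [hkey S hS hiS ht]
    · rw [sum_update_of_not_mem' ht]
      exact hall S hS

/-- Termination measure for the fractional Hall recursion. -/
def hallMeasure (P : ι → σσ → Prop) (A : Finset ι) (B : Finset σσ) (s : σσ → ℝ) (d : ι → ℝ) :
    ℕ :=
  A.card * (B.card + 2) + (B.filter fun t => 0 < s t).card +
    (if ∃ S : Finset ι, S ⊆ A ∧ S.Nonempty ∧ S ≠ A ∧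
        ∑ i ∈ S, d i = ∑ t ∈ sparseNB P B S, s t then 0 else 1)


lemma measure_helper {a a' b p p' f f' n : ℕ} (hp : p' ≤ b) (hf' : f' ≤ 1) (ha : a' < a)
    (h : a * (b + 2) + p + f ≤ n + 1) : a' * (b + 2) + p' + f' ≤ n := by
  have h4 : (a' + 1) * (b + 2) ≤ a * (b + 2) := Nat.mul_le_mul_right _ ha
  rw [Nat.succ_mul] at h4
  omega

lemma ite01_le {c : Prop} [Decidable c] : (if c then 0 else 1) ≤ 1 := by
  split <;> omega

/-- The fractional Hall / Gale supply-demand theorem. -/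
theorem fracHall (P : ι → σσ → Prop) (B : Finset σσ) :
    ∀ (n : ℕ) (A : Finset ι) (s : σσ → ℝ) (d : ι → ℝ), hallMeasure P A B s d ≤ n →
      (∀ t ∈ B, 0 ≤ s t) → (∀ i ∈ A, 0 ≤ d i) → HallCond P A B s d →
      ∃ x : ι → σσ → ℝ, IsAlloc P A B s d x := by
  intro n
  induction n with
  | zero =>
    intro A s d hmeas _ _ _
    exfalso
    unfold hallMeasure at hmeas
    have hA : A.card = 0 := by
      by_contra hc
      have h1 : 1 ≤ A.card := Nat.one_le_iff_ne_zero.mpr hc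
      have h2 : B.card + 2 ≤ A.card * (B.card + 2) := le_mul_of_one_le_left (Nat.zero_le _) h1
      omega
    by_cases hex : ∃ S : Finset ι, S ⊆ A ∧ S.Nonempty ∧ S ≠ A ∧
        ∑ i ∈ S, d i = ∑ t ∈ sparseNB P B S, s t
    · obtain ⟨S, hS, hSne, -, -⟩ := hex
      have : S = ∅ := Finset.subset_empty.mp (Finset.card_eq_zero.mp hA ▸ hS)
      exact Finset.nonempty_iff_ne_empty.mp hSne this
    · rw [if_neg hex] at hmeas
      omega
  | succ n ih =>
    intro A s d hmeas hs hd hall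
    by_cases hA : A = ∅
    · refine ⟨fun _ _ => 0, fun _ _ => le_rfl, fun i t h => absurd rfl h, ?_, ?_⟩
      · intro i hi
        rw [hA] at hi
        exact absurd hi (Finset.notMem_empty i)
      · intro t ht
        rw [Finset.sum_eq_zero fun _ _ => rfl]
        exact hs t ht
    by_cases htight : ∃ S : Finset ι, S ⊆ A ∧ S.Nonempty ∧ S ≠ A ∧
        ∑ i ∈ S, d i = ∑ t ∈ sparseNB P B S, s t
    · obtain ⟨S, hSA, hSne, hSneA, hSt⟩ := htight
      have hScard : S.card < A.card :=
        Finset.card_lt_card (Finset.ssubset_iff_subset_ne.mpr ⟨hSA, hSneA⟩)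
      have hmeas1 : hallMeasure P S B s d ≤ n := by
        unfold hallMeasure at hmeas ⊢
        exact measure_helper (Finset.card_le_card (Finset.filter_subset _ _)) ite01_le hScard hmeas
      obtain ⟨xS, hx0, hxsupp, hxrow, hxcol⟩ := ih S s d hmeas1 hs
        (fun i hi => hd i (hSA hi)) (fun S' hS' => hall S' (hS'.trans hSA))
      have husednn : ∀ t, 0 ≤ ∑ i ∈ S, xS i t := fun t => Finset.sum_nonneg fun i _ => hx0 i t
      have hzero_out : ∀ t, t ∉ sparseNB P B S → ∑ i ∈ S, xS i t = 0 := by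
        intro t htN
        apply Finset.sum_eq_zero
        intro i hi
        by_contra hc
        obtain ⟨hiS, htB, hPi⟩ := hxsupp i t hc
        exact htN (mem_sparseNB.mpr ⟨htB, i, hiS, hPi⟩)
      have hsat : ∀ t ∈ sparseNB P B S, ∑ i ∈ S, xS i t = s t := by
        have hsum : ∑ t ∈ sparseNB P B S, ∑ i ∈ S, xS i t = ∑ t ∈ sparseNB P B S, s t := by
          rw [Finset.sum_comm]
          have h2 : ∀ i ∈ S, ∑ t ∈ sparseNB P B S, xS i t = ∑ t ∈ B, xS i t := by
            intro i hi
            apply Finset.sum_subset sparseNB_subset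
            intro t htB htN
            by_contra hc
            obtain ⟨hiS, htB', hPi⟩ := hxsupp i t hc
            exact htN (mem_sparseNB.mpr ⟨htB, i, hiS, hPi⟩)
          rw [Finset.sum_congr rfl h2, Finset.sum_congr rfl (fun i hi => hxrow i hi)]
          exact hSt
        intro t ht
        exact (Finset.sum_eq_sum_iff_of_le
          (fun t ht => hxcol t (sparseNB_subset ht))).mp hsum t ht
      have hall' : HallCond P (A \ S) B (fun t => s t - ∑ i ∈ S, xS i t) d := by
        intro S' hS'
        have hS'A : S' ⊆ A := hS'.trans Finset.sdiff_subset
        have hdisj : Disjoint S S' := Finset.disjoint_left.mpr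
          fun i hiS hiS' => (Finset.mem_sdiff.mp (hS' hiS')).2 hiS
        have hU := hall (S ∪ S') (Finset.union_subset hSA hS'A)
        rw [Finset.sum_union hdisj, sparseNB_union] at hU
        have h3 : ∑ t ∈ sparseNB P B S ∪ sparseNB P B S', s t
            = ∑ t ∈ sparseNB P B S, s t + ∑ t ∈ sparseNB P B S' \ sparseNB P B S, s t := by
          rw [← Finset.sum_union Finset.disjoint_sdiff]
          congr 1
          rw [Finset.union_sdiff_self_eq_union]
        have h4 : ∑ t ∈ sparseNB P B S', (s t - ∑ i ∈ S, xS i t)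
            = ∑ t ∈ sparseNB P B S' \ sparseNB P B S, s t := by
          rw [← Finset.sum_inter_add_sum_sdiff (sparseNB P B S') (sparseNB P B S)
            (fun t => s t - ∑ i ∈ S, xS i t)]
          have hz : ∑ t ∈ sparseNB P B S' ∩ sparseNB P B S, (s t - ∑ i ∈ S, xS i t) = 0 :=
            Finset.sum_eq_zero fun t ht => by
              have := hsat t (Finset.mem_inter.mp ht).2
              linarith
          have heq : ∀ t ∈ sparseNB P B S' \ sparseNB P B S,
              s t - ∑ i ∈ S, xS i t = s t := fun t ht => by
            have := hzero_out t (Finset.mem_sdiff.mp ht).2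
            linarith
          rw [hz, zero_add, Finset.sum_congr rfl heq]
        rw [h4]
        linarith
      have hcard2 : (A \ S).card < A.card := by
        have h1 := Finset.card_sdiff_of_subset hSA
        have h2 := Finset.card_le_card hSA
        have h3 := Finset.Nonempty.card_pos hSne
        omega
      have hmeas2 : hallMeasure P (A \ S) B (fun t => s t - ∑ i ∈ S, xS i t) d ≤ n := by
        unfold hallMeasure at hmeas ⊢
        exact measure_helper (Finset.card_le_card (Finset.filter_subset _ _)) ite01_le hcard2 hmeas
      obtain ⟨xR, hy0, hysupp, hyrow, hycol⟩ := ih (A \ S) (fun t => s t - ∑ i ∈ S, xS i t) d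
        hmeas2 (fun t ht => by have := hxcol t ht; linarith)
        (fun i hi => hd i (Finset.mem_sdiff.mp hi).1) hall'
      refine ⟨fun i t => if i ∈ S then xS i t else xR i t, ?_, ?_, ?_, ?_⟩
      · intro i t
        dsimp only
        split
        · exact hx0 i t
        · exact hy0 i t
      · intro i t hne
        dsimp only at hne
        by_cases hiS : i ∈ S
        · rw [if_pos hiS] at hne
          obtain ⟨h1, h2, h3⟩ := hxsupp i t hne
          exact ⟨hSA h1, h2, h3⟩
        · rw [if_neg hiS] at hne
          obtain ⟨h1, h2, h3⟩ := hysupp i t hne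
          exact ⟨Finset.sdiff_subset h1, h2, h3⟩
      · intro i hi
        dsimp only
        by_cases hiS : i ∈ S
        · rw [Finset.sum_congr rfl fun t _ => if_pos hiS]
          exact hxrow i hiS
        · rw [Finset.sum_congr rfl fun t _ => if_neg hiS]
          exact hyrow i (Finset.mem_sdiff.mpr ⟨hi, hiS⟩)
      · intro t ht
        dsimp only
        rw [← Finset.sum_sdiff hSA]
        have e1 : ∑ i ∈ A \ S, (if i ∈ S then xS i t else xR i t) = ∑ i ∈ A \ S, xR i t :=
          Finset.sum_congr rfl fun i hi => if_neg (Finset.mem_sdiff.mp hi).2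
        have e2 : ∑ i ∈ S, (if i ∈ S then xS i t else xR i t) = ∑ i ∈ S, xS i t :=
          Finset.sum_congr rfl fun i hi => if_pos hi
        rw [e1, e2]
        have := hycol t ht
        simp only at this
        linarith
    by_cases hdpos : ∃ i₀ ∈ A, 0 < d i₀
    case neg =>
      refine ⟨fun _ _ => 0, fun _ _ => le_rfl, fun i t h => absurd rfl h, ?_, ?_⟩
      · intro i hi
        push_neg at hdpos
        rw [Finset.sum_eq_zero fun _ _ => rfl]
        exact (le_antisymm (hdpos i hi) (hd i hi)).symm
      · intro t ht
        rw [Finset.sum_eq_zero fun _ _ => rfl]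
        exact hs t ht
    case pos =>
      obtain ⟨i₀, hi₀A, hdi₀⟩ := hdpos
      -- find a supply atom t₀ available to i₀ with positive supply
      have hne : ∃ t₀ ∈ sparseNB P B {i₀}, 0 < s t₀ := by
        by_contra hcon
        push_neg at hcon
        have h0 : ∑ t ∈ sparseNB P B {i₀}, s t ≤ 0 := by
          apply Finset.sum_nonpos
          intro t ht
          exact hcon t ht
        have := hall {i₀} (Finset.singleton_subset_iff.mpr hi₀A)
        rw [Finset.sum_singleton] at this
        linarith
      obtain ⟨t₀, ht₀NB, hst₀⟩ := hne
      have ht₀B : t₀ ∈ B := sparseNB_subset ht₀NB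
      have hPt₀ : P i₀ t₀ := by
        obtain ⟨-, i, hi, hPi⟩ := mem_sparseNB.mp ht₀NB
        rwa [Finset.mem_singleton.mp hi] at hPi
      by_cases hsing : A = {i₀}
      · -- SINGLETON CASE
        have hbound : d i₀ ≤ ∑ t ∈ sparseNB P B {i₀}, s t := by
          have := hall {i₀} (Finset.singleton_subset_iff.mpr hi₀A)
          rwa [Finset.sum_singleton] at this
        obtain ⟨u, hu0, hus, huB, husum⟩ := greedy_fill (sparseNB P B {i₀}) s (d i₀)
          (fun t ht => hs t (sparseNB_subset ht)) hdi₀.le hbound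
        refine ⟨fun i t => if i = i₀ then u t else 0, ?_, ?_, ?_, ?_⟩
        · intro i t
          dsimp only
          split
          · exact hu0 t
          · exact le_rfl
        · intro i t hne
          dsimp only at hne
          by_cases h : i = i₀
          · rw [if_pos h] at hne
            have htNB : t ∈ sparseNB P B {i₀} := by
              by_contra hc
              exact hne (huB t hc)
            obtain ⟨htB, j, hj, hPj⟩ := mem_sparseNB.mp htNB
            rw [Finset.mem_singleton] at hj
            subst hj
            exact ⟨h ▸ hi₀A, htB, h ▸ hPj⟩
          · rw [if_neg h] at hne
            exact absurd rfl hne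
        · intro i hi
          rw [hsing, Finset.mem_singleton] at hi
          dsimp only
          rw [Finset.sum_congr rfl fun t _ => if_pos hi, hi]
          rw [← Finset.sum_subset (sparseNB_subset : sparseNB P B {i₀} ⊆ B)
            (fun t htB htN => huB t htN)]
          exact husum
        · intro t ht
          rw [hsing, Finset.sum_singleton]
          dsimp only
          rw [if_pos rfl]
          by_cases htN : t ∈ sparseNB P B {i₀}
          · exact hus t htN
          · rw [huB t htN]
            exact hs t ht
      · -- MAIN CASE
        set 𝒯 := (A.erase i₀).powerset.filter
          (fun S => S.Nonempty ∧ t₀ ∈ sparseNB P B S) with h𝒯def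
        have hslack : ∀ S ∈ 𝒯, ∑ i ∈ S, d i < ∑ t ∈ sparseNB P B S, s t := by
          intro S hS
          rw [h𝒯def, Finset.mem_filter, Finset.mem_powerset] at hS
          obtain ⟨hSe, hSne, -⟩ := hS
          have hSA : S ⊆ A := hSe.trans (Finset.erase_subset _ _)
          have hSneA : S ≠ A := by
            intro h
            exact (Finset.notMem_erase i₀ A) (hSe (h ▸ hi₀A))
          have hne2 : ∑ i ∈ S, d i ≠ ∑ t ∈ sparseNB P B S, s t :=
            fun h => htight ⟨S, hSA, hSne, hSneA, h⟩
          exact lt_of_le_of_ne (hall S hSA) hne2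
        set δ := if h : 𝒯.Nonempty
          then 𝒯.inf' h (fun S => ∑ t ∈ sparseNB P B S, s t - ∑ i ∈ S, d i)
          else max (s t₀) (d i₀) + 1 with hδdef
        have hδpos : 0 < δ := by
          rw [hδdef]
          split
          · next h =>
              rw [Finset.lt_inf'_iff]
              intro S hS
              linarith [hslack S hS]
          · next h =>
              have := le_max_left (s t₀) (d i₀)
              linarith
        have hδkey : ∀ S : Finset ι, S ⊆ A.erase i₀ → t₀ ∈ sparseNB P B S →
            ∑ i ∈ S, d i + δ ≤ ∑ t ∈ sparseNB P B S, s t := by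
          intro S hSe ht
          have hSne : S.Nonempty := by
            obtain ⟨-, i, hi, -⟩ := mem_sparseNB.mp ht
            exact ⟨i, hi⟩
          have hS𝒯 : S ∈ 𝒯 := by
            rw [h𝒯def, Finset.mem_filter, Finset.mem_powerset]
            exact ⟨hSe, hSne, ht⟩
          have h𝒯ne : 𝒯.Nonempty := ⟨S, hS𝒯⟩
          have hle : δ ≤ ∑ t ∈ sparseNB P B S, s t - ∑ i ∈ S, d i := by
            rw [hδdef, dif_pos h𝒯ne]
            exact Finset.inf'_le _ hS𝒯
          linarith
        have hkey : ∀ m : ℝ, m ≤ δ → ∀ S : Finset ι, S ⊆ A → i₀ ∉ S →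
            t₀ ∈ sparseNB P B S → ∑ i ∈ S, d i + m ≤ ∑ t ∈ sparseNB P B S, s t := by
          intro m hm S hSA hiS ht
          have := hδkey S (Finset.subset_erase.mpr ⟨hSA, hiS⟩) ht
          linarith
        have hmeas' : A.card * (B.card + 2) + (B.filter fun t => 0 < s t).card + 1 ≤ n + 1 := by
          unfold hallMeasure at hmeas
          rwa [if_neg htight] at hmeas
        by_cases hc1 : d i₀ ≤ min (s t₀) δ
        · -- assign d i₀ fully at t₀, drop i₀
          have hds : d i₀ ≤ s t₀ := hc1.trans (min_le_left _ _)
          have hcard : (A.erase i₀).card < A.card := Finset.card_erase_lt_of_mem hi₀A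
          have hmeas2 :
              hallMeasure P (A.erase i₀) B (Function.update s t₀ (s t₀ - d i₀)) d ≤ n := by
            unfold hallMeasure at hmeas ⊢
            exact measure_helper (Finset.card_le_card (Finset.filter_subset _ _)) ite01_le
              hcard hmeas
          have hs2 : ∀ t ∈ B, 0 ≤ Function.update s t₀ (s t₀ - d i₀) t := by
            intro t ht
            by_cases h : t = t₀
            · subst h
              rw [Function.update_self]
              linarith
            · rw [Function.update_of_ne h]
              exact hs t ht
          have hall2 : HallCond P (A.erase i₀) B (Function.update s t₀ (s t₀ - d i₀)) d := by
            intro S hS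
            by_cases ht : t₀ ∈ sparseNB P B S
            · rw [sum_update_sub ht]
              have := hδkey S hS ht
              have hdδ : d i₀ ≤ δ := hc1.trans (min_le_right _ _)
              linarith
            · rw [sum_update_of_not_mem' ht]
              exact hall S (hS.trans (Finset.erase_subset _ _))
          obtain ⟨x', hx0, hxsupp, hxrow, hxcol⟩ := ih (A.erase i₀) _ d hmeas2 hs2
            (fun i hi => hd i (Finset.erase_subset _ _ hi)) hall2
          have hx'i₀ : ∀ t, x' i₀ t = 0 := by
            intro t
            by_contra hc
            exact Finset.notMem_erase i₀ A (hxsupp i₀ t hc).1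
          refine ⟨fun i t => (if i = i₀ ∧ t = t₀ then d i₀ else 0) + x' i t, ?_, ?_, ?_, ?_⟩
          · intro i t
            dsimp only
            have := hx0 i t
            by_cases hit : i = i₀ ∧ t = t₀
            · rw [if_pos hit]
              linarith
            · rw [if_neg hit, zero_add]
              exact this
          · intro i t hne
            dsimp only at hne
            by_cases hit : i = i₀ ∧ t = t₀
            · exact ⟨hit.1 ▸ hi₀A, hit.2 ▸ ht₀B, hit.1 ▸ hit.2 ▸ hPt₀⟩
            · rw [if_neg hit, zero_add] at hne
              obtain ⟨h1, h2, h3⟩ := hxsupp i t hne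
              exact ⟨Finset.erase_subset _ _ h1, h2, h3⟩
          · intro i hi
            dsimp only
            rw [Finset.sum_add_distrib]
            by_cases hii : i = i₀
            · have h1 : ∑ t ∈ B, (if i = i₀ ∧ t = t₀ then d i₀ else 0) = d i₀ := by
                simp only [hii, true_and]
                rw [Finset.sum_ite_eq' B t₀ (fun _ => d i₀)]
                exact if_pos ht₀B
              have h2 : ∑ t ∈ B, x' i t = 0 :=
                Finset.sum_eq_zero fun t _ => by rw [hii]; exact hx'i₀ t
              rw [h1, h2, hii, add_zero]
            · have h1 : ∑ t ∈ B, (if i = i₀ ∧ t = t₀ then d i₀ else 0) = 0 :=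
                Finset.sum_eq_zero fun t _ => if_neg fun hc => hii hc.1
              rw [h1, zero_add]
              exact hxrow i (Finset.mem_erase.mpr ⟨hii, hi⟩)
          · intro t ht
            dsimp only
            rw [Finset.sum_add_distrib]
            have hsplit : ∑ i ∈ A, x' i t = ∑ i ∈ A.erase i₀, x' i t := by
              symm
              apply Finset.sum_subset (Finset.erase_subset _ _)
              intro i hiA hie
              have hii : i = i₀ := by
                by_contra hii
                exact hie (Finset.mem_erase.mpr ⟨hii, hiA⟩)
              rw [hii]
              exact hx'i₀ t
            by_cases htt : t = t₀
            · have h1 : ∑ i ∈ A, (if i = i₀ ∧ t = t₀ then d i₀ else 0) = d i₀ := by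
                simp only [htt, and_true]
                rw [Finset.sum_ite_eq' A i₀ (fun _ => d i₀)]
                exact if_pos hi₀A
              have h2 := hxcol t ht
              rw [htt, Function.update_self] at h2
              rw [h1, hsplit, htt]
              linarith
            · have h1 : ∑ i ∈ A, (if i = i₀ ∧ t = t₀ then d i₀ else 0) = 0 :=
                Finset.sum_eq_zero fun i _ => if_neg fun hc => htt hc.2
              have h2 := hxcol t ht
              rw [Function.update_of_ne htt] at h2
              rw [h1, hsplit, zero_add]
              exact h2
        · have hmlt : min (s t₀) δ < d i₀ := lt_of_not_ge hc1
          by_cases hc2 : s t₀ ≤ δ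
          · -- m = s t₀
            have hsd : s t₀ ≤ d i₀ := by
              rw [min_eq_left hc2] at hmlt
              exact hmlt.le
            have hfilter : (B.filter fun t => 0 < Function.update s t₀ (s t₀ - s t₀) t)
                = (B.filter fun t => 0 < s t).erase t₀ := by
              ext t
              rw [Finset.mem_filter, Finset.mem_erase, Finset.mem_filter]
              by_cases h : t = t₀
              · subst h
                rw [Function.update_self]
                constructor
                · rintro ⟨-, hlt⟩
                  linarith
                · rintro ⟨hne2, -⟩
                  exact absurd rfl hne2
              · rw [Function.update_of_ne h]
                constructor
                · rintro ⟨hB, hlt⟩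
                  exact ⟨h, hB, hlt⟩
                · rintro ⟨-, hB, hlt⟩
                  exact ⟨hB, hlt⟩
            have ht₀f : t₀ ∈ B.filter fun t => 0 < s t := Finset.mem_filter.mpr ⟨ht₀B, hst₀⟩
            have hmeas2 : hallMeasure P A B (Function.update s t₀ (s t₀ - s t₀))
                (Function.update d i₀ (d i₀ - s t₀)) ≤ n := by
              unfold hallMeasure
              rw [hfilter, Finset.card_erase_of_mem ht₀f]
              have h3 : 1 ≤ (B.filter fun t => 0 < s t).card := Finset.card_pos.mpr ⟨t₀, ht₀f⟩
              split <;> omega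
            have hs2 : ∀ t ∈ B, 0 ≤ Function.update s t₀ (s t₀ - s t₀) t := by
              intro t ht
              by_cases h : t = t₀
              · subst h
                rw [Function.update_self]
                linarith
              · rw [Function.update_of_ne h]
                exact hs t ht
            have hd2 : ∀ i ∈ A, 0 ≤ Function.update d i₀ (d i₀ - s t₀) i := by
              intro i hi
              by_cases h : i = i₀
              · subst h
                rw [Function.update_self]
                linarith
              · rw [Function.update_of_ne h]
                exact hd i hi
            have hall2 := hall_update hi₀A ht₀B hPt₀ hall (hkey (s t₀) hc2)
            obtain ⟨x', hx'⟩ := ih A _ _ hmeas2 hs2 hd2 hall2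
            exact alloc_addback hi₀A ht₀B hPt₀ hst₀.le hx'
          · -- m = δ
            have hδs : δ < s t₀ := lt_of_not_ge hc2
            have hδd : δ < d i₀ := by
              rw [min_eq_right hδs.le] at hmlt
              exact hmlt
            have h𝒯ne : 𝒯.Nonempty := by
              by_contra h
              rw [hδdef, dif_neg h] at hδs
              have := le_max_left (s t₀) (d i₀)
              linarith
            obtain ⟨Sm, hSm𝒯, hSmeq⟩ := Finset.exists_mem_eq_inf' h𝒯ne
              (fun S => ∑ t ∈ sparseNB P B S, s t - ∑ i ∈ S, d i)
            have hδeq : δ = ∑ t ∈ sparseNB P B Sm, s t - ∑ i ∈ Sm, d i := by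
              rw [hδdef, dif_pos h𝒯ne]
              exact hSmeq
            rw [h𝒯def, Finset.mem_filter, Finset.mem_powerset] at hSm𝒯
            obtain ⟨hSme, hSmne, ht₀Sm⟩ := hSm𝒯
            have hi₀Sm : i₀ ∉ Sm := fun h => Finset.notMem_erase i₀ A (hSme h)
            have htight2 : ∃ S : Finset ι, S ⊆ A ∧ S.Nonempty ∧ S ≠ A ∧
                ∑ i ∈ S, Function.update d i₀ (d i₀ - δ) i
                = ∑ t ∈ sparseNB P B S, Function.update s t₀ (s t₀ - δ) t := by
              refine ⟨Sm, hSme.trans (Finset.erase_subset _ _), hSmne, ?_, ?_⟩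
              · intro h
                exact hi₀Sm (h ▸ hi₀A)
              · rw [sum_update_sub ht₀Sm]
                rw [Finset.sum_congr rfl fun i hi =>
                  Function.update_of_ne (fun he : i = i₀ => hi₀Sm (he ▸ hi)) _ _]
                linarith
            have hfiltereq : (B.filter fun t => 0 < Function.update s t₀ (s t₀ - δ) t)
                = B.filter fun t => 0 < s t := by
              ext t
              rw [Finset.mem_filter, Finset.mem_filter]
              by_cases h : t = t₀
              · subst h
                rw [Function.update_self]
                constructor
                · rintro ⟨hB, -⟩
                  exact ⟨hB, hst₀⟩
                · rintro ⟨hB, -⟩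
                  exact ⟨hB, by linarith⟩
              · rw [Function.update_of_ne h]
            have hmeas2 : hallMeasure P A B (Function.update s t₀ (s t₀ - δ))
                (Function.update d i₀ (d i₀ - δ)) ≤ n := by
              unfold hallMeasure
              rw [hfiltereq, if_pos htight2]
              omega
            have hs2 : ∀ t ∈ B, 0 ≤ Function.update s t₀ (s t₀ - δ) t := by
              intro t ht
              by_cases h : t = t₀
              · subst h
                rw [Function.update_self]
                linarith
              · rw [Function.update_of_ne h]
                exact hs t ht
            have hd2 : ∀ i ∈ A, 0 ≤ Function.update d i₀ (d i₀ - δ) i := by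
              intro i hi
              by_cases h : i = i₀
              · subst h
                rw [Function.update_self]
                linarith
              · rw [Function.update_of_ne h]
                exact hd i hi
            have hall2 := hall_update hi₀A ht₀B hPt₀ hall (hkey δ le_rfl)
            obtain ⟨x', hx'⟩ := ih A _ _ hmeas2 hs2 hd2 hall2
            exact alloc_addback hi₀A ht₀B hPt₀ hδpos.le hx'



abbrev Rect : Type := (ℝ × ℝ) × (ℝ × ℝ)

lemma measurable_rset (r : Rect) : MeasurableSet (rset r) :=
  measurableSet_Ico.prod measurableSet_Ico

lemma volume_rset (r : Rect) :
    volume (rset r) = ENNReal.ofReal (r.1.2 - r.1.1) * ENNReal.ofReal (r.2.2 - r.2.1) := by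
  rw [rset, Measure.volume_eq_prod, Measure.prod_prod, Real.volume_Ico, Real.volume_Ico]

lemma volume_rset_ne_top (r : Rect) : volume (rset r) ≠ ⊤ := by
  rw [volume_rset]
  exact ENNReal.mul_ne_top ENNReal.ofReal_ne_top ENNReal.ofReal_ne_top

/-- An open neighborhood of `rset r` whose measure exceeds it by `O(ε)`. -/
def rnbhd (r : Rect) (ε : ℝ) : Set (ℝ × ℝ) :=
  (Set.Ioo (r.1.1 - ε) r.1.2) ×ˢ (Set.Ioo (r.2.1 - ε) r.2.2)

lemma isOpen_rnbhd (r : Rect) (ε : ℝ) : IsOpen (rnbhd r ε) :=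
  isOpen_Ioo.prod isOpen_Ioo

lemma rset_subset_rnbhd (r : Rect) {ε : ℝ} (hε : 0 < ε) : rset r ⊆ rnbhd r ε := by
  rintro ⟨x, y⟩ ⟨⟨hx1, hx2⟩, hy1, hy2⟩
  exact ⟨⟨by linarith, hx2⟩, ⟨by linarith, hy2⟩⟩

lemma volume_rnbhd_le (r : Rect) {ε : ℝ} (hε : 0 < ε) (hε1 : ε ≤ 1) :
    volume (rnbhd r ε) ≤ volume (rset r) + ENNReal.ofReal ε *
      (ENNReal.ofReal (r.1.2 - r.1.1) + ENNReal.ofReal (r.2.2 - r.2.1) + 1) := by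
  rw [volume_rset, rnbhd, Measure.volume_eq_prod, Measure.prod_prod, Real.volume_Ioo,
    Real.volume_Ioo]
  have h1 : ENNReal.ofReal (r.1.2 - (r.1.1 - ε))
      ≤ ENNReal.ofReal (r.1.2 - r.1.1) + ENNReal.ofReal ε := by
    rw [show r.1.2 - (r.1.1 - ε) = (r.1.2 - r.1.1) + ε by ring]
    exact ENNReal.ofReal_add_le
  have h2 : ENNReal.ofReal (r.2.2 - (r.2.1 - ε))
      ≤ ENNReal.ofReal (r.2.2 - r.2.1) + ENNReal.ofReal ε := by
    rw [show r.2.2 - (r.2.1 - ε) = (r.2.2 - r.2.1) + ε by ring]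
    exact ENNReal.ofReal_add_le
  calc ENNReal.ofReal (r.1.2 - (r.1.1 - ε)) * ENNReal.ofReal (r.2.2 - (r.2.1 - ε))
      ≤ (ENNReal.ofReal (r.1.2 - r.1.1) + ENNReal.ofReal ε) *
        (ENNReal.ofReal (r.2.2 - r.2.1) + ENNReal.ofReal ε) := mul_le_mul' h1 h2
    _ = ENNReal.ofReal (r.1.2 - r.1.1) * ENNReal.ofReal (r.2.2 - r.2.1) +
        ENNReal.ofReal ε * (ENNReal.ofReal (r.1.2 - r.1.1) + ENNReal.ofReal (r.2.2 - r.2.1)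
          + ENNReal.ofReal ε) := by ring
    _ ≤ _ := by
        gcongr
        exact ENNReal.ofReal_le_one.mpr hε1

lemma carleson_to_union {Λ : ℝ} (𝒞 : Finset Rect)
    (hcar : ∀ Ω : Set (ℝ × ℝ), IsOpen Ω → 0 < volume Ω → volume Ω < ⊤ →
        ∑ r ∈ 𝒞, (if rset r ⊆ Ω then volume (rset r) else 0) ≤ ENNReal.ofReal Λ * volume Ω)
    (S : Finset Rect) (hS : S ⊆ 𝒞) :
    ∑ r ∈ S, volume (rset r) ≤
      ENNReal.ofReal Λ * volume (⋃ r ∈ (S : Set Rect), rset r) := by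
  set U := ⋃ r ∈ (S : Set Rect), rset r with hU
  have hUm : volume U ≤ ∑ r ∈ S, volume (rset r) := measure_biUnion_finset_le S _
  have hsumfin : (∑ r ∈ S, volume (rset r)) < ⊤ :=
    ENNReal.sum_lt_top.mpr fun r _ => (volume_rset_ne_top r).lt_top
  have hUfin : volume U < ⊤ := lt_of_le_of_lt hUm hsumfin
  refine ENNReal.le_of_forall_pos_le_add ?_
  intro ε' hε' _
  set K : ℝ≥0∞ := (∑ r ∈ S, (ENNReal.ofReal (r.1.2 - r.1.1) + ENNReal.ofReal (r.2.2 - r.2.1)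
    + 1)) + 1 with hKdef
  have hKtop : K ≠ ⊤ := by
    rw [hKdef]
    refine ENNReal.add_ne_top.mpr ⟨?_, ENNReal.one_ne_top⟩
    refine (ENNReal.sum_lt_top.mpr fun r _ => ?_).ne
    refine ENNReal.add_lt_top.mpr ⟨ENNReal.add_lt_top.mpr ⟨?_, ?_⟩, ENNReal.one_lt_top⟩
    · exact ENNReal.ofReal_lt_top
    · exact ENNReal.ofReal_lt_top
  set η := (ε' : ℝ≥0∞) / (ENNReal.ofReal Λ * K + 1) with hηdef
  have hdenom0 : (ENNReal.ofReal Λ * K + 1) ≠ 0 := by simp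
  have hdenomtop : (ENNReal.ofReal Λ * K + 1) ≠ ⊤ := by
    refine ENNReal.add_ne_top.mpr ⟨ENNReal.mul_ne_top ENNReal.ofReal_ne_top hKtop,
      ENNReal.one_ne_top⟩
  have hηpos : 0 < η := ENNReal.div_pos (by exact_mod_cast hε'.ne') hdenomtop
  have hηtop : η ≠ ⊤ := by
    rw [hηdef]
    exact (ENNReal.div_lt_top ENNReal.coe_ne_top hdenom0).ne
  set ε := min 1 η.toReal with hεdef
  have hεpos : 0 < ε := lt_min one_pos (ENNReal.toReal_pos hηpos.ne' hηtop)
  have hε1 : ε ≤ 1 := min_le_left _ _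
  have hεη : ENNReal.ofReal ε ≤ η := by
    calc ENNReal.ofReal ε ≤ ENNReal.ofReal η.toReal :=
          ENNReal.ofReal_le_ofReal (min_le_right _ _)
      _ = η := ENNReal.ofReal_toReal hηtop
  set Ω := ⋃ r ∈ (S : Set Rect), rnbhd r ε with hΩdef
  have hΩopen : IsOpen Ω := isOpen_biUnion fun r _ => isOpen_rnbhd r ε
  have hsub : ∀ r ∈ S, rset r ⊆ Ω := by
    intro r hr
    rw [hΩdef]
    exact (rset_subset_rnbhd r hεpos).trans
      (Set.subset_biUnion_of_mem (s := (S : Set Rect)) (u := fun r' => rnbhd r' ε)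
        (show r ∈ (S : Set Rect) from hr))
  have hΩle : volume Ω ≤ volume U + ENNReal.ofReal ε * K := by
    have hcover : Ω ⊆ U ∪ ⋃ r ∈ (S : Set Rect), (rnbhd r ε \ rset r) := by
      intro z hz
      rw [hΩdef, mem_iUnion₂] at hz
      obtain ⟨r, hr, hzr⟩ := hz
      by_cases hzU : z ∈ U
      · exact Or.inl hzU
      · exact Or.inr (mem_iUnion₂.mpr ⟨r, hr,
          ⟨hzr, fun hc => hzU (mem_iUnion₂.mpr ⟨r, hr, hc⟩)⟩⟩)
    calc volume Ω ≤ volume U + volume (⋃ r ∈ (S : Set Rect), (rnbhd r ε \ rset r)) :=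
          le_trans (measure_mono hcover) (measure_union_le _ _)
      _ ≤ volume U + ∑ r ∈ S, volume (rnbhd r ε \ rset r) :=
          add_le_add_right (measure_biUnion_finset_le _ _) _
      _ ≤ volume U + ∑ r ∈ S, ENNReal.ofReal ε * (ENNReal.ofReal (r.1.2 - r.1.1)
          + ENNReal.ofReal (r.2.2 - r.2.1) + 1) := by
          gcongr with r hr
          have hd := measure_diff (rset_subset_rnbhd r hεpos)
            (measurable_rset r).nullMeasurableSet (volume_rset_ne_top r)
          rw [hd]
          rw [tsub_le_iff_right]
          calc volume (rnbhd r ε) ≤ volume (rset r) + ENNReal.ofReal ε *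
                (ENNReal.ofReal (r.1.2 - r.1.1) + ENNReal.ofReal (r.2.2 - r.2.1) + 1) :=
                volume_rnbhd_le r hεpos hε1
            _ = _ := by ring
      _ ≤ volume U + ENNReal.ofReal ε * K := by
          rw [← Finset.mul_sum]
          gcongr
          rw [hKdef]
          exact le_add_right le_rfl
  by_cases hΩ0 : volume Ω = 0
  · have hz : ∀ r ∈ S, volume (rset r) = 0 := fun r hr =>
      measure_mono_null (hsub r hr) hΩ0
    rw [Finset.sum_congr rfl hz, Finset.sum_const, smul_zero]
    exact bot_le
  · have hΩpos : 0 < volume Ω := zero_lt_iff.mpr hΩ0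
    have hΩfin : volume Ω < ⊤ := lt_of_le_of_lt hΩle
      (ENNReal.add_lt_top.mpr ⟨hUfin,
        ENNReal.mul_lt_top ENNReal.ofReal_lt_top hKtop.lt_top⟩)
    have h1 := hcar Ω hΩopen hΩpos hΩfin
    have h2 : ∑ r ∈ S, volume (rset r)
        ≤ ∑ r ∈ 𝒞, (if rset r ⊆ Ω then volume (rset r) else 0) := by
      calc ∑ r ∈ S, volume (rset r)
          = ∑ r ∈ S, (if rset r ⊆ Ω then volume (rset r) else 0) :=
            Finset.sum_congr rfl fun r hr => (if_pos (hsub r hr)).symm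
        _ ≤ _ := Finset.sum_le_sum_of_subset hS
    calc ∑ r ∈ S, volume (rset r) ≤ ENNReal.ofReal Λ * volume Ω := le_trans h2 h1
      _ ≤ ENNReal.ofReal Λ * (volume U + ENNReal.ofReal ε * K) := mul_le_mul_right hΩle _
      _ = ENNReal.ofReal Λ * volume U + ENNReal.ofReal Λ * (ENNReal.ofReal ε * K) :=
          mul_add _ _ _
      _ ≤ ENNReal.ofReal Λ * volume U + (ε' : ℝ≥0∞) := by
          gcongr
          calc ENNReal.ofReal Λ * (ENNReal.ofReal ε * K) ≤ ENNReal.ofReal Λ * (η * K) := by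
                gcongr
            _ = (ENNReal.ofReal Λ * K) * η := by ring
            _ ≤ (ENNReal.ofReal Λ * K + 1) * η := by
                gcongr
                exact le_add_right le_rfl
            _ = (ε' : ℝ≥0∞) := by
                rw [hηdef]
                exact ENNReal.mul_div_cancel hdenom0 hdenomtop

def atomOf (𝒞 T : Finset Rect) : Set (ℝ × ℝ) := {z | ∀ r ∈ 𝒞, (z ∈ rset r ↔ r ∈ T)}

lemma measurable_atomOf (𝒞 T : Finset Rect) : MeasurableSet (atomOf 𝒞 T) := by
  have heq : atomOf 𝒞 T = ⋂ r ∈ (𝒞 : Set Rect), (if r ∈ T then rset r else (rset r)ᶜ) := by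
    ext z
    simp only [atomOf, mem_setOf_eq, mem_iInter, Finset.mem_coe]
    constructor
    · intro h r hr
      by_cases hrT : r ∈ T
      · rw [if_pos hrT]
        exact (h r hr).mpr hrT
      · rw [if_neg hrT]
        exact fun hc => hrT ((h r hr).mp hc)
    · intro h r hr
      have := h r hr
      by_cases hrT : r ∈ T
      · rw [if_pos hrT] at this
        exact ⟨fun _ => hrT, fun _ => this⟩
      · rw [if_neg hrT] at this
        exact ⟨fun hc => absurd hc this, fun hc => absurd hc hrT⟩
  rw [heq]
  refine MeasurableSet.biInter 𝒞.countable_toSet fun r _ => ?_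
  split
  · exact measurable_rset r
  · exact (measurable_rset r).compl

lemma atomOf_subset {𝒞 T : Finset Rect} {r : Rect} (hr𝒞 : r ∈ 𝒞) (hrT : r ∈ T) :
    atomOf 𝒞 T ⊆ rset r := fun _ hz => (hz r hr𝒞).mpr hrT

lemma atomOf_disjoint {𝒞 T T' : Finset Rect} (hT : T ⊆ 𝒞) (hT' : T' ⊆ 𝒞) (hne : T ≠ T') :
    Disjoint (atomOf 𝒞 T) (atomOf 𝒞 T') := by
  rw [Set.disjoint_left]
  intro z hz hz'
  apply hne
  ext r
  by_cases hr : r ∈ 𝒞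
  · rw [← hz r hr, ← hz' r hr]
  · exact ⟨fun h => absurd (hT h) hr, fun h => absurd (hT' h) hr⟩

lemma biUnion_atoms (𝒞 : Finset Rect) (S : Finset Rect) (hS : S ⊆ 𝒞) :
    ⋃ r ∈ (S : Set Rect), rset r =
      ⋃ T ∈ ((sparseNB (fun (r : Rect) (T : Finset Rect) => r ∈ T)
        (𝒞.powerset.filter (fun T => T.Nonempty)) S : Finset (Finset Rect)) :
          Set (Finset Rect)), atomOf 𝒞 T := by
  ext z
  simp only [mem_iUnion₂, Finset.mem_coe]
  constructor
  · rintro ⟨r, hrS, hzr⟩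
    refine ⟨𝒞.filter (fun r' => z ∈ rset r'), ?_, ?_⟩
    · rw [mem_sparseNB]
      refine ⟨Finset.mem_filter.mpr ⟨Finset.mem_powerset.mpr (Finset.filter_subset _ _),
        ⟨r, Finset.mem_filter.mpr ⟨hS hrS, hzr⟩⟩⟩, r, hrS, Finset.mem_filter.mpr
          ⟨hS hrS, hzr⟩⟩
    · intro r' hr'
      rw [Finset.mem_filter]
      exact ⟨fun h => ⟨hr', h⟩, fun h => h.2⟩
  · rintro ⟨T, hT, hzT⟩
    rw [mem_sparseNB] at hT
    obtain ⟨hTB, r, hrS, hrT⟩ := hT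
    rw [Finset.mem_filter, Finset.mem_powerset] at hTB
    exact ⟨r, hrS, atomOf_subset (hS hrS) hrT hzT⟩

/-- A finite family of axis-parallel rectangles is `Λ`-Carleson if and only if
it is `Λ⁻¹`-sparse. -/
theorem carleson_iff_sparse (Λ : ℝ) (hΛ : 0 < Λ) (𝒞 : Finset ((ℝ × ℝ) × (ℝ × ℝ))) :
    (∀ Ω : Set (ℝ × ℝ), IsOpen Ω → 0 < volume Ω → volume Ω < ⊤ →
        ∑ r ∈ 𝒞, (if rset r ⊆ Ω then volume (rset r) else 0) ≤ ENNReal.ofReal Λ * volume Ω) ↔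
      (∃ E : ((ℝ × ℝ) × (ℝ × ℝ)) → Set (ℝ × ℝ),
        (∀ r ∈ 𝒞, MeasurableSet (E r)) ∧ (∀ r ∈ 𝒞, E r ⊆ rset r) ∧
        (∀ r ∈ 𝒞, ENNReal.ofReal Λ⁻¹ * volume (rset r) ≤ volume (E r)) ∧
        (𝒞 : Set ((ℝ × ℝ) × (ℝ × ℝ))).PairwiseDisjoint E) := by
  have hΛ1 : ENNReal.ofReal Λ * ENNReal.ofReal Λ⁻¹ = 1 := by
    rw [← ENNReal.ofReal_mul hΛ.le, mul_inv_cancel₀ hΛ.ne', ENNReal.ofReal_one]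
  constructor
  · -- hard direction: Carleson ⇒ sparse
    intro hcar
    set P : Rect → Finset Rect → Prop := fun r T => r ∈ T with hPdef
    set ℬ : Finset (Finset Rect) := 𝒞.powerset.filter (fun T => T.Nonempty) with hℬdef
    have hℬsub : ∀ T ∈ ℬ, T ⊆ 𝒞 := fun T hT =>
      Finset.mem_powerset.mp (Finset.mem_filter.mp hT).1
    have hatomfin : ∀ T ∈ ℬ, volume (atomOf 𝒞 T) ≠ ⊤ := by
      intro T hT
      obtain ⟨r, hr⟩ := (Finset.mem_filter.mp hT).2
      exact ne_top_of_le_ne_top (volume_rset_ne_top r)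
        (measure_mono (atomOf_subset (hℬsub T hT hr) hr))
    have hUdecomp : ∀ S : Finset Rect, S ⊆ 𝒞 →
        volume (⋃ r ∈ (S : Set Rect), rset r) =
          ∑ T ∈ sparseNB P ℬ S, volume (atomOf 𝒞 T) := by
      intro S hS
      rw [biUnion_atoms 𝒞 S hS]
      refine measure_biUnion_finset ?_ (fun T _ => measurable_atomOf 𝒞 T)
      intro T hT T' hT' hne
      rw [Finset.mem_coe] at hT hT'
      exact (atomOf_disjoint (hℬsub T (mem_sparseNB.mp hT).1)
        (hℬsub T' (mem_sparseNB.mp hT').1) hne).mono le_rfl le_rfl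
    set sfun : Finset Rect → ℝ := fun T => (volume (atomOf 𝒞 T)).toReal with hsdef
    set dfun : Rect → ℝ := fun r => Λ⁻¹ * (volume (rset r)).toReal with hddef
    have hs : ∀ T ∈ ℬ, 0 ≤ sfun T := fun T _ => ENNReal.toReal_nonneg
    have hd : ∀ r ∈ 𝒞, 0 ≤ dfun r := fun r _ =>
      mul_nonneg (inv_nonneg.mpr hΛ.le) ENNReal.toReal_nonneg
    have hallC : HallCond P 𝒞 ℬ sfun dfun := by
      intro S hS
      have h1 := carleson_to_union 𝒞 hcar S hS
      have hsumfin : (∑ r ∈ S, volume (rset r)) ≠ ⊤ :=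
        (ENNReal.sum_lt_top.mpr fun r _ => (volume_rset_ne_top r).lt_top).ne
      have hUfin : volume (⋃ r ∈ (S : Set Rect), rset r) ≠ ⊤ :=
        ne_top_of_le_ne_top hsumfin (measure_biUnion_finset_le S _)
      have h2 : (∑ r ∈ S, volume (rset r)).toReal ≤
          Λ * (volume (⋃ r ∈ (S : Set Rect), rset r)).toReal := by
        have h3 := ENNReal.toReal_mono
          (by exact ENNReal.mul_ne_top ENNReal.ofReal_ne_top hUfin) h1
        rwa [ENNReal.toReal_mul, ENNReal.toReal_ofReal hΛ.le] at h3
      have h4 : ∑ r ∈ S, dfun r = Λ⁻¹ * (∑ r ∈ S, volume (rset r)).toReal := by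
        rw [ENNReal.toReal_sum (fun r _ => volume_rset_ne_top r), Finset.mul_sum]
      have h5 : ∑ T ∈ sparseNB P ℬ S, sfun T =
          (volume (⋃ r ∈ (S : Set Rect), rset r)).toReal := by
        rw [hUdecomp S hS, ENNReal.toReal_sum
          (fun T hT => hatomfin T (mem_sparseNB.mp hT).1)]
      rw [h4, h5]
      calc Λ⁻¹ * (∑ r ∈ S, volume (rset r)).toReal
          ≤ Λ⁻¹ * (Λ * (volume (⋃ r ∈ (S : Set Rect), rset r)).toReal) := by
            apply mul_le_mul_of_nonneg_left h2 (inv_nonneg.mpr hΛ.le)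
        _ = _ := by
            field_simp
    obtain ⟨x, hx0, hxsupp, hxrow, hxcol⟩ :=
      fracHall P ℬ (hallMeasure P 𝒞 ℬ sfun dfun) 𝒞 sfun dfun le_rfl hs hd hallC
    have hcake : ∀ T : Finset Rect, ∃ F : Rect → Set (ℝ × ℝ),
        T ∈ ℬ → ((∀ r, F r ⊆ atomOf 𝒞 T) ∧ (∀ r, MeasurableSet (F r)) ∧
          (∀ r ∈ 𝒞, volume (F r) = ENNReal.ofReal (x r T)) ∧
          (∀ r ∈ 𝒞, ∀ r' ∈ 𝒞, r ≠ r' → Disjoint (F r) (F r'))) := by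
      intro T
      by_cases hT : T ∈ ℬ
      · have hsum : ∑ r ∈ 𝒞, ENNReal.ofReal (x r T) ≤ volume (atomOf 𝒞 T) := by
          rw [← ENNReal.ofReal_sum_of_nonneg (fun r _ => hx0 r T)]
          calc ENNReal.ofReal (∑ r ∈ 𝒞, x r T) ≤ ENNReal.ofReal (sfun T) :=
                ENNReal.ofReal_le_ofReal (hxcol T hT)
            _ = volume (atomOf 𝒞 T) := ENNReal.ofReal_toReal (hatomfin T hT)
        obtain ⟨F, h1, h2, h3, h4⟩ := cake_cutting 𝒞 (atomOf 𝒞 T) (measurable_atomOf 𝒞 T)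
          (hatomfin T hT) _ hsum
        exact ⟨F, fun _ => ⟨h1, h2, h3, h4⟩⟩
      · exact ⟨fun _ => ∅, fun h => absurd h hT⟩
    choose F hF using hcake
    set E : Rect → Set (ℝ × ℝ) :=
      fun r => ⋃ T ∈ (ℬ : Set (Finset Rect)), (if x r T = 0 then ∅ else F T r) with hEdef
    have hpiece_sub : ∀ (r : Rect) (T : Finset Rect), T ∈ ℬ →
        (if x r T = 0 then ∅ else F T r) ⊆ atomOf 𝒞 T := by
      intro r T hT
      split
      · exact empty_subset _
      · exact (hF T hT).1 r
    refine ⟨E, ?_, ?_, ?_, ?_⟩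
    · -- measurability
      intro r _
      refine MeasurableSet.biUnion ℬ.countable_toSet fun T hT => ?_
      rw [Finset.mem_coe] at hT
      split
      · exact MeasurableSet.empty
      · exact (hF T hT).2.1 r
    · -- E r ⊆ rset r
      intro r hr
      refine iUnion₂_subset fun T hT => ?_
      rw [Finset.mem_coe] at hT
      by_cases hx : x r T = 0
      · rw [if_pos hx]
        exact empty_subset _
      · rw [if_neg hx]
        obtain ⟨-, -, hrT⟩ := hxsupp r T hx
        exact ((hF T hT).1 r).trans (atomOf_subset hr hrT)
    · -- volume lower bound
      intro r hr
      have hEvol : volume (E r) = ∑ T ∈ ℬ, volume (if x r T = 0 then ∅ else F T r) := by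
        rw [hEdef]
        refine measure_biUnion_finset ?_ ?_
        · intro T hT T' hT' hne
          rw [Finset.mem_coe] at hT hT'
          exact Disjoint.mono (hpiece_sub r T hT) (hpiece_sub r T' hT')
            (atomOf_disjoint (hℬsub T hT) (hℬsub T' hT') hne)
        · intro T hT
          split
          · exact MeasurableSet.empty
          · exact (hF T hT).2.1 r
      have hterm : ∀ T ∈ ℬ, volume (if x r T = 0 then ∅ else F T r)
          = ENNReal.ofReal (x r T) := by
        intro T hT
        by_cases hx : x r T = 0
        · rw [if_pos hx, hx, measure_empty, ENNReal.ofReal_zero]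
        · rw [if_neg hx]
          exact (hF T hT).2.2.1 r hr
      rw [hEvol, Finset.sum_congr rfl hterm,
        ← ENNReal.ofReal_sum_of_nonneg (fun T _ => hx0 r T), hxrow r hr]
      have : ENNReal.ofReal (dfun r) = ENNReal.ofReal Λ⁻¹ * volume (rset r) := by
        rw [hddef]
        dsimp only
        rw [ENNReal.ofReal_mul (inv_nonneg.mpr hΛ.le),
          ENNReal.ofReal_toReal (volume_rset_ne_top r)]
      rw [this]
    · -- pairwise disjoint
      intro r hr r' hr' hne
      rw [Finset.mem_coe] at hr hr'
      refine Set.disjoint_left.mpr ?_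
      intro z hz hz'
      rw [hEdef] at hz hz'
      simp only [mem_iUnion₂, Finset.mem_coe] at hz hz'
      obtain ⟨T, hT, hzT⟩ := hz
      obtain ⟨T', hT', hzT'⟩ := hz'
      have hx : x r T ≠ 0 := by
        intro h
        rw [if_pos h] at hzT
        exact hzT
      have hx' : x r' T' ≠ 0 := by
        intro h
        rw [if_pos h] at hzT'
        exact hzT'
      rw [if_neg hx] at hzT
      rw [if_neg hx'] at hzT'
      by_cases hTT : T = T'
      · subst hTT
        exact Set.disjoint_left.mp ((hF T hT).2.2.2 r hr r' hr' hne) hzT hzT'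
      · exact Set.disjoint_left.mp
          (atomOf_disjoint (hℬsub T hT) (hℬsub T' hT') hTT)
          ((hF T hT).1 r hzT) ((hF T' hT').1 r' hzT')
  · -- easy direction: sparse ⇒ Carleson
    rintro ⟨E, hEm, hEsub, hEvol, hEdisj⟩ Ω hΩopen hΩpos hΩfin
    set S := 𝒞.filter (fun r => rset r ⊆ Ω) with hSdef
    have h1 : ∑ r ∈ 𝒞, (if rset r ⊆ Ω then volume (rset r) else 0)
        = ∑ r ∈ S, volume (rset r) := (Finset.sum_filter _ _).symm
    rw [h1]
    have h2 : ∀ r ∈ S, volume (rset r) ≤ ENNReal.ofReal Λ * volume (E r) := by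
      intro r hrS
      have hr𝒞 : r ∈ 𝒞 := (Finset.mem_filter.mp hrS).1
      calc volume (rset r) = ENNReal.ofReal Λ * (ENNReal.ofReal Λ⁻¹ * volume (rset r)) := by
            rw [← mul_assoc, hΛ1, one_mul]
        _ ≤ ENNReal.ofReal Λ * volume (E r) := mul_le_mul_right (hEvol r hr𝒞) _
    calc ∑ r ∈ S, volume (rset r) ≤ ∑ r ∈ S, ENNReal.ofReal Λ * volume (E r) :=
          Finset.sum_le_sum h2
      _ = ENNReal.ofReal Λ * ∑ r ∈ S, volume (E r) := by rw [Finset.mul_sum]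
      _ = ENNReal.ofReal Λ * volume (⋃ r ∈ S, E r) := by
          congr 1
          refine (measure_biUnion_finset ?_ ?_).symm
          · exact hEdisj.subset (by
              intro r hrS
              rw [Finset.mem_coe, Finset.mem_filter] at hrS
              exact hrS.1)
          · intro r hrS
            exact hEm r (Finset.mem_filter.mp hrS).1
      _ ≤ ENNReal.ofReal Λ * volume Ω := by
          apply mul_le_mul_right
          apply measure_mono
          refine iUnion₂_subset fun r hrS => ?_
          rw [hSdef, Finset.mem_filter] at hrS
          exact (hEsub r hrS.1).trans hrS.2

end
end

section
/- Let {Ω_i}_{i≥0} be a contracting family of measurable sets in ℝ², i.e., Ω_{i+1} ⊂ Ω_i and |Ω_{i+1}| ≤ (1/2)|Ω_i| for all i, with 0 < |Ω_0| < ∞. Then the maximal operator m(g)(z) = sup_{i : z ∈ Ω_i} ⟨|g|⟩_{Ω_i} is bounded on L^p(ℝ²) for every 1 < p ≤ ∞, with operator norm depending only on p. -/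
open MeasureTheory Set
open scoped ENNReal Classical

noncomputable section

lemma ofReal_setIntegral_abs_le {α : Type*} [MeasurableSpace α] (μ : Measure α)
    (g : α → ℝ) (s : Set α) :
    ENNReal.ofReal (∫ w in s, |g w| ∂μ) ≤ ∫⁻ w in s, (‖g w‖₊ : ℝ≥0∞) ∂μ := by
  by_cases hint : Integrable (fun w => |g w|) (μ.restrict s)
  · rw [MeasureTheory.ofReal_integral_eq_lintegral_ofReal hint
      (Filter.Eventually.of_forall fun w => abs_nonneg _)]
    exact le_of_eq (lintegral_congr fun w => (Real.enorm_eq_ofReal_abs _).symm)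
  · rw [MeasureTheory.integral_undef hint]; simp

lemma lintegral_le_rpow_mul_rpow {α : Type*} [MeasurableSpace α] (f : α → ℝ≥0∞) (μ : Measure α)
    {pr q : ℝ} (hpq : pr.HolderConjugate q) :
    ∫⁻ a, f a ∂μ ≤ (∫⁻ a, f a ^ pr ∂μ) ^ (1 / pr) * (μ Set.univ) ^ (1 / q) := by
  obtain ⟨h, hm, hle, heq⟩ := exists_measurable_le_lintegral_eq μ f
  rw [heq]
  have h2 := ENNReal.lintegral_mul_le_Lp_mul_Lq μ hpq (f := h) (g := fun _ => (1 : ℝ≥0∞))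
      hm.aemeasurable aemeasurable_const
  simp only [Pi.mul_apply, mul_one, ENNReal.one_rpow, lintegral_const, one_mul] at h2
  refine h2.trans (mul_le_mul_left (ENNReal.rpow_le_rpow
    (lintegral_mono fun a => ENNReal.rpow_le_rpow (hle a) hpq.nonneg)
    (div_nonneg zero_le_one hpq.pos.le)) _)

lemma tsum_mul_le_rpow_mul_rpow (u v : ℕ → ℝ≥0∞) {pr q : ℝ} (hpq : pr.HolderConjugate q) :
    ∑' k, u k * v k ≤ (∑' k, u k ^ pr) ^ (1 / pr) * (∑' k, v k ^ q) ^ (1 / q) := by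
  have h := ENNReal.lintegral_mul_le_Lp_mul_Lq (Measure.count : Measure ℕ) hpq
      (f := u) (g := v) measurable_from_top.aemeasurable measurable_from_top.aemeasurable
  simpa [MeasureTheory.lintegral_count] using h

lemma half_pow_rpow (k : ℕ) (y : ℝ) :
    ((2⁻¹ : ℝ≥0∞) ^ k) ^ y = ((2⁻¹ : ℝ≥0∞) ^ y) ^ k := by
  rw [← ENNReal.rpow_natCast (2⁻¹ : ℝ≥0∞) k, ← ENNReal.rpow_mul, mul_comm, ENNReal.rpow_mul,
    ENNReal.rpow_natCast]

/-- The maximal operator associated with a contracting family of measurable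
sets is bounded on `L^p(ℝ²)` for `1 < p ≤ ∞`, with norm depending only on `p`. -/
theorem contracting_maximal_bounded (p : ℝ≥0∞) (hp : 1 < p) :
    ∃ C : ℝ, 0 < C ∧
      ∀ Ω : ℕ → Set (ℝ × ℝ),
        (∀ i, MeasurableSet (Ω i)) →
        (∀ i, Ω (i + 1) ⊆ Ω i) →
        (∀ i, volume (Ω (i + 1)) ≤ volume (Ω i) / 2) →
        0 < volume (Ω 0) → volume (Ω 0) < ⊤ →
        ∀ g : ℝ × ℝ → ℝ,
          eLpNorm (fun z => ⨆ i : {i : ℕ // z ∈ Ω i},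
              (volume (Ω i.1)).toReal⁻¹ * ∫ w in Ω i.1, |g w|) p volume ≤
            ENNReal.ofReal C * eLpNorm g p volume := by
  rcases eq_or_ne p ∞ with hptop | hptop
  · -- the case p = ∞
    refine ⟨1, one_pos, fun Ω hmeas hsub hhalf h0 hfin g => ?_⟩
    subst hptop
    have hanti : Antitone Ω := antitone_nat_of_succ_le hsub
    rw [ENNReal.ofReal_one, one_mul, eLpNorm_exponent_top, eLpNorm_exponent_top]
    set M := eLpNormEssSup g volume with hM
    rcases eq_or_ne M ∞ with hMtop | hMtop
    · rw [hMtop]; exact le_top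
    have key : ∀ z : ℝ × ℝ, (⨆ i : {i : ℕ // z ∈ Ω i},
        (volume (Ω i.1)).toReal⁻¹ * ∫ w in Ω i.1, |g w|) ≤ M.toReal := by
      intro z
      refine Real.iSup_le (fun i => ?_) ENNReal.toReal_nonneg
      have hfin_i : volume (Ω i.1) ≠ ∞ :=
        ((measure_mono (hanti (Nat.zero_le _))).trans_lt hfin).ne
      have h1 : ENNReal.ofReal (∫ w in Ω i.1, |g w|) ≤ M * volume (Ω i.1) := by
        refine (ofReal_setIntegral_abs_le volume g _).trans ?_
        calc (∫⁻ w in Ω i.1, (‖g w‖₊ : ℝ≥0∞)) ≤ ∫⁻ _ in Ω i.1, M :=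
              lintegral_mono_ae (ae_restrict_of_ae (enorm_ae_le_eLpNormEssSup g volume))
          _ = M * volume (Ω i.1) := MeasureTheory.setLIntegral_const _ _
      have h2 : (∫ w in Ω i.1, |g w|) ≤ M.toReal * (volume (Ω i.1)).toReal := by
        have hmm : M * volume (Ω i.1) ≠ ∞ := ENNReal.mul_ne_top hMtop hfin_i
        have := (ENNReal.ofReal_le_iff_le_toReal hmm).mp h1
        rwa [ENNReal.toReal_mul] at this
      calc (volume (Ω i.1)).toReal⁻¹ * ∫ w in Ω i.1, |g w|
          ≤ (volume (Ω i.1)).toReal⁻¹ * (M.toReal * (volume (Ω i.1)).toReal) := by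
            gcongr
          _ = M.toReal * ((volume (Ω i.1)).toReal⁻¹ * (volume (Ω i.1)).toReal) := by ring
          _ ≤ M.toReal * 1 := by
            gcongr
            rcases eq_or_ne (volume (Ω i.1)).toReal 0 with h | h
            · simp [h]
            · rw [inv_mul_cancel₀ h]
          _ = M.toReal := mul_one _
    refine le_trans (eLpNormEssSup_le_of_ae_bound (C := M.toReal)
      (Filter.Eventually.of_forall fun z => ?_)) ?_
    · rw [Real.norm_eq_abs, abs_of_nonneg]
      · exact key z
      · exact Real.iSup_nonneg fun i => mul_nonneg (inv_nonneg.mpr ENNReal.toReal_nonneg)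
          (integral_nonneg fun w => abs_nonneg _)
    · rw [ENNReal.ofReal_toReal hMtop]
  · -- the case p < ∞
    have hp0 : p ≠ 0 := (lt_trans zero_lt_one hp).ne'
    have hpr1 : 1 < p.toReal := by
      rw [← ENNReal.toReal_one]
      exact (ENNReal.toReal_lt_toReal ENNReal.one_ne_top hptop).mpr hp
    set pr := p.toReal with hprdef
    have hpr0 : (0:ℝ) < pr := lt_trans one_pos hpr1
    set q := Real.conjExponent pr with hqdef
    have hpq : pr.HolderConjugate q := Real.HolderConjugate.conjExponent hpr1
    have hq0 : (0:ℝ) < q := hpq.symm.pos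
    have hhalf_lt : (2⁻¹ : ℝ≥0∞) < 1 := by
      rw [ENNReal.inv_lt_one]; exact ENNReal.one_lt_two
    set r : ℝ≥0∞ := (2⁻¹ : ℝ≥0∞) ^ (1/q) with hrdef
    have hr1 : r < 1 := ENNReal.rpow_lt_one hhalf_lt (by positivity)
    have hr0 : r ≠ 0 := by
      rw [hrdef]
      simp [ENNReal.rpow_eq_zero_iff]
    have hrtop : r ≠ ∞ := by
      rw [hrdef]
      simp [ENNReal.rpow_eq_top_iff]
    set K : ℝ≥0∞ := (1 - r)⁻¹ with hKdef
    have hgeom : ∑' k : ℕ, r ^ k = K := ENNReal.tsum_geometric r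
    have hKtop : K ≠ ∞ := by
      rw [hKdef, Ne, ENNReal.inv_eq_top, tsub_eq_zero_iff_le]
      exact not_le.mpr hr1
    have hK0 : K ≠ 0 := by
      rw [hKdef, Ne, ENNReal.inv_eq_zero]
      exact (tsub_le_self.trans_lt ENNReal.one_lt_top).ne
    refine ⟨K.toReal, ENNReal.toReal_pos hK0 hKtop, fun Ω hmeas hsub hhalf h0 hfin g => ?_⟩
    rw [ENNReal.ofReal_toReal hKtop]
    have hanti : Antitone Ω := antitone_nat_of_succ_le hsub
    set G : ℝ × ℝ → ℝ≥0∞ := fun z => (‖g z‖₊ : ℝ≥0∞) with hGdef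
    set T := ∫⁻ z, G z ^ pr with hTdef
    have heLp : eLpNorm g p volume = T ^ (1/pr) :=
      eLpNorm_eq_lintegral_rpow_enorm_toReal hp0 hptop
    rcases eq_or_ne T ∞ with hTtop | hTtop
    · rw [heLp, hTtop, ENNReal.top_rpow_of_pos (by positivity), ENNReal.mul_top hK0]
      exact le_top
    set v : ℕ → ℝ≥0∞ := fun i => volume (Ω i) with hvdef
    have hvfin : ∀ i, v i ≠ ∞ := fun i =>
      ((measure_mono (hanti (Nat.zero_le i))).trans_lt hfin).ne
    have hvgeo : ∀ i k, v (i + k) ≤ v i * (2⁻¹ : ℝ≥0∞) ^ k := by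
      intro i k
      induction k with
      | zero => simp
      | succ k ih =>
        calc v (i + (k+1)) ≤ v (i + k) / 2 := hhalf _
          _ ≤ (v i * 2⁻¹ ^ k) / 2 := by gcongr
          _ = v i * 2⁻¹ ^ (k+1) := by
            rw [div_eq_mul_inv, pow_succ, mul_assoc]
    set A : ℕ → Set (ℝ × ℝ) := fun j => Ω j \ Ω (j+1) with hAdef
    have hAmeas : ∀ j, MeasurableSet (A j) := fun j => (hmeas j).diff (hmeas (j+1))
    have hAdisj : Pairwise (Function.onFun Disjoint A) := by
      intro j j' hne
      rcases hne.lt_or_gt with hlt | hlt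
      · exact Set.disjoint_left.mpr fun z hz hz' => hz.2 (hanti (by omega) hz'.1)
      · exact Set.disjoint_left.mpr fun z hz hz' => hz'.2 (hanti (by omega) hz.1)
    set b : ℕ → ℝ≥0∞ := fun j => ∫⁻ z in A j, G z ^ pr with hbdef
    have hsum_b : ∀ k : ℕ, ∑' i : ℕ, b (i + k) ≤ T := by
      intro k
      calc ∑' i : ℕ, b (i + k) ≤ ∑' j : ℕ, b j :=
            ENNReal.tsum_comp_le_tsum_of_injective (add_left_injective k) b
        _ = ∫⁻ z in ⋃ j, A j, G z ^ pr := by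
            rw [Measure.restrict_iUnion hAdisj hAmeas, lintegral_sum_measure]
        _ ≤ T := lintegral_mono' Measure.restrict_le_self le_rfl
    have hnull : volume (⋂ n, Ω n) = 0 := by
      have hle : ∀ n : ℕ, volume (⋂ m, Ω m) ≤ v 0 * (2⁻¹ : ℝ≥0∞) ^ n := fun n =>
        (measure_mono (Set.iInter_subset _ n)).trans (by simpa using hvgeo 0 n)
      have h1 : Filter.Tendsto (fun n : ℕ => ((2 : ℝ≥0∞)⁻¹) ^ n) Filter.atTop (nhds 0) :=
        ENNReal.tendsto_pow_atTop_nhds_zero_of_lt_one hhalf_lt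
      have htend : Filter.Tendsto (fun n : ℕ => v 0 * (2⁻¹ : ℝ≥0∞) ^ n)
          Filter.atTop (nhds 0) := by
        simpa using ENNReal.Tendsto.const_mul h1 (Or.inr (hvfin 0))
      exact le_antisymm (ge_of_tendsto' htend hle) zero_le
    have hcover : ∀ i, Ω i ⊆ (⋃ k : ℕ, A (i + k)) ∪ ⋂ n, Ω n := by
      intro i z hz
      by_cases hzall : ∀ n, z ∈ Ω n
      · exact Or.inr (Set.mem_iInter.mpr hzall)
      · push_neg at hzall
        have hex : ∃ m, z ∉ Ω m := hzall
        have hzm : z ∉ Ω (Nat.find hex) := Nat.find_spec hex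
        have him : i < Nat.find hex := by
          by_contra h
          exact hzm (hanti (not_lt.mp h) hz)
        have hzm1 : z ∈ Ω (Nat.find hex - 1) := by
          by_contra h
          exact Nat.find_min hex (m := Nat.find hex - 1) (by omega) h
        refine Or.inl (Set.mem_iUnion.mpr ⟨Nat.find hex - 1 - i, ?_⟩)
        have heq : i + (Nat.find hex - 1 - i) = Nat.find hex - 1 := by omega
        rw [hAdef]
        simp only [heq]
        exact ⟨hzm1, by rwa [Nat.sub_add_cancel (by omega)]⟩
    have hdecomp : ∀ i, (∫⁻ z in Ω i, G z) ≤ ∑' k : ℕ, ∫⁻ z in A (i + k), G z := by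
      intro i
      calc (∫⁻ z in Ω i, G z) ≤ ∫⁻ z in (⋃ k : ℕ, A (i + k)) ∪ ⋂ n, Ω n, G z :=
            lintegral_mono' (Measure.restrict_mono (hcover i) le_rfl) le_rfl
        _ ≤ (∫⁻ z in ⋃ k : ℕ, A (i + k), G z) + ∫⁻ z in ⋂ n, Ω n, G z := by
            rw [← lintegral_add_measure]
            exact lintegral_mono' (Measure.restrict_union_le _ _) le_rfl
        _ = ∫⁻ z in ⋃ k : ℕ, A (i + k), G z := by
            rw [Measure.restrict_eq_zero.mpr hnull, lintegral_zero_measure, add_zero]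
        _ ≤ ∑' k : ℕ, ∫⁻ z in A (i + k), G z := by
            rw [← lintegral_sum_measure]
            exact lintegral_mono' Measure.restrict_iUnion_le le_rfl
    have hholder : ∀ j, (∫⁻ z in A j, G z) ≤ b j ^ (1/pr) * v j ^ (1/q) := by
      intro j
      refine (lintegral_le_rpow_mul_rpow G _ hpq).trans ?_
      rw [Measure.restrict_apply_univ]
      exact mul_le_mul_right (ENNReal.rpow_le_rpow
        (measure_mono Set.diff_subset) (div_nonneg zero_le_one hq0.le)) _
    set Amax : ℕ → ℝ≥0∞ :=
      fun i => ENNReal.ofReal ((v i).toReal⁻¹ * ∫ w in Ω i, |g w|) with hAmaxdef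
    have hmain : ∀ i, Amax i ^ pr * v i ≤ K ^ (pr/q) * ∑' k : ℕ, b (i + k) * r ^ k := by
      intro i
      rcases eq_or_ne (v i) 0 with hvi0 | hvi0
      · rw [hvi0, mul_zero]; exact zero_le
      have hvfin_i := hvfin i
      have hxv : ENNReal.ofReal ((v i).toReal⁻¹) = (v i)⁻¹ := by
        rw [← ENNReal.toReal_inv, ENNReal.ofReal_toReal (ENNReal.inv_ne_top.mpr hvi0)]
      have h1 : Amax i ≤ (v i)⁻¹ * ∫⁻ z in Ω i, G z := by
        rw [hAmaxdef]
        simp only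
        rw [ENNReal.ofReal_mul (inv_nonneg.mpr ENNReal.toReal_nonneg), hxv]
        exact mul_le_mul_right (ofReal_setIntegral_abs_le volume g _) _
      have h2 : (∫⁻ z in Ω i, G z) ≤ v i ^ (1/q) * ∑' k : ℕ, b (i+k) ^ (1/pr) * r ^ k := by
        refine (hdecomp i).trans ?_
        rw [← ENNReal.tsum_mul_left]
        refine ENNReal.tsum_le_tsum fun k => ?_
        refine (hholder (i+k)).trans ?_
        calc b (i+k) ^ (1/pr) * v (i+k) ^ (1/q)
            ≤ b (i+k) ^ (1/pr) * (v i * 2⁻¹ ^ k) ^ (1/q) :=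
              mul_le_mul_right (ENNReal.rpow_le_rpow (hvgeo i k)
                (div_nonneg zero_le_one hq0.le)) _
          _ = v i ^ (1/q) * (b (i+k) ^ (1/pr) * r ^ k) := by
              rw [ENNReal.mul_rpow_of_nonneg _ _ (div_nonneg zero_le_one hq0.le),
                half_pow_rpow, ← hrdef]
              ring
      have hsplit : ∀ k : ℕ, b (i+k) ^ (1/pr) * r ^ k
          = ((b (i+k) * r ^ k) ^ (1/pr)) * ((r ^ k) ^ (1/q)) := by
        intro k
        rw [ENNReal.mul_rpow_of_nonneg _ _ (div_nonneg zero_le_one hpr0.le), mul_assoc]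
        congr 1
        rw [← ENNReal.rpow_add _ _ (pow_ne_zero k hr0) (ENNReal.pow_ne_top hrtop),
          one_div, one_div, hpq.inv_add_inv_eq_one, ENNReal.rpow_one]
      have h3 : (∑' k : ℕ, b (i+k) ^ (1/pr) * r ^ k)
          ≤ (∑' k : ℕ, b (i+k) * r ^ k) ^ (1/pr) * K ^ (1/q) := by
        calc (∑' k : ℕ, b (i+k) ^ (1/pr) * r ^ k)
            = ∑' k : ℕ, ((b (i+k) * r ^ k) ^ (1/pr)) * ((r ^ k) ^ (1/q)) :=
              tsum_congr hsplit
          _ ≤ (∑' k : ℕ, ((b (i+k) * r ^ k) ^ (1/pr)) ^ pr) ^ (1/pr) *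
              (∑' k : ℕ, ((r ^ k) ^ (1/q)) ^ q) ^ (1/q) :=
              tsum_mul_le_rpow_mul_rpow _ _ hpq
          _ = (∑' k : ℕ, b (i+k) * r ^ k) ^ (1/pr) * K ^ (1/q) := by
              rw [← hgeom]
              congr 1
              · congr 1
                exact tsum_congr fun k => by
                  rw [one_div, ENNReal.rpow_inv_rpow hpr0.ne']
              · congr 1
                exact tsum_congr fun k => by
                  rw [one_div, ENNReal.rpow_inv_rpow hq0.ne']
      set S := ∑' k : ℕ, b (i+k) * r ^ k with hSdef
      have hfinal : Amax i ≤ (v i) ^ (-(1/pr)) * (S ^ (1/pr) * K ^ (1/q)) := by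
        refine h1.trans ?_
        calc (v i)⁻¹ * ∫⁻ z in Ω i, G z
            ≤ (v i)⁻¹ * (v i ^ (1/q) * (S ^ (1/pr) * K ^ (1/q))) :=
              mul_le_mul_right (h2.trans (mul_le_mul_right h3 _)) _
          _ = ((v i)⁻¹ * v i ^ (1/q)) * (S ^ (1/pr) * K ^ (1/q)) := by ring
          _ = (v i) ^ (-(1/pr)) * (S ^ (1/pr) * K ^ (1/q)) := by
              congr 1
              rw [← ENNReal.rpow_neg_one (v i), ← ENNReal.rpow_add _ _ hvi0 hvfin_i]
              congr 1
              have h := hpq.inv_add_inv_eq_one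
              rw [one_div, one_div] at *
              linarith
      calc Amax i ^ pr * v i
          ≤ ((v i) ^ (-(1/pr)) * (S ^ (1/pr) * K ^ (1/q))) ^ pr * v i := by
            gcongr
        _ = (v i)⁻¹ * (S * K ^ (pr/q)) * v i := by
            congr 1
            rw [ENNReal.mul_rpow_of_nonneg _ _ hpr0.le, ENNReal.mul_rpow_of_nonneg _ _ hpr0.le,
              ← ENNReal.rpow_mul, ← ENNReal.rpow_mul, ← ENNReal.rpow_mul,
              show -(1/pr)*pr = -1 by field_simp,
              show (1/pr)*pr = 1 by field_simp,
              show (1/q)*pr = pr/q by ring,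
              ENNReal.rpow_neg_one, ENNReal.rpow_one]
        _ = K ^ (pr/q) * S := by
            rw [mul_comm ((v i)⁻¹) (S * K ^ (pr/q)), mul_assoc,
              ENNReal.inv_mul_cancel hvi0 hvfin_i, mul_one, mul_comm]
    have hexp : pr/q + 1 = pr := by
      have h := hpq.inv_add_inv_eq_one
      have hqne : q ≠ 0 := hq0.ne'
      field_simp at h ⊢
      linarith
    have hsum : (∑' i : ℕ, Amax i ^ pr * v i) ≤ K ^ pr * T := by
      calc (∑' i : ℕ, Amax i ^ pr * v i)
          ≤ ∑' i : ℕ, K ^ (pr/q) * ∑' k : ℕ, b (i + k) * r ^ k :=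
            ENNReal.tsum_le_tsum hmain
        _ = K ^ (pr/q) * ∑' i : ℕ, ∑' k : ℕ, b (i + k) * r ^ k := ENNReal.tsum_mul_left
        _ = K ^ (pr/q) * ∑' k : ℕ, (∑' i : ℕ, b (i + k)) * r ^ k := by
            rw [ENNReal.tsum_comm]
            congr 1
            exact tsum_congr fun k => ENNReal.tsum_mul_right
        _ ≤ K ^ (pr/q) * ∑' k : ℕ, T * r ^ k := by
            gcongr with k
            exact hsum_b k
        _ = K ^ (pr/q) * (T * K) := by rw [ENNReal.tsum_mul_left, hgeom]
        _ = K ^ pr * T := by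
            have hKsplit : K ^ (pr/q) * K = K ^ pr := by
              nth_rewrite 2 [← ENNReal.rpow_one K]
              rw [← ENNReal.rpow_add _ _ hK0 hKtop, hexp]
            rw [← hKsplit]
            ring
    have hpoint : ∀ z : ℝ × ℝ, (ENNReal.ofReal (⨆ i : {i : ℕ // z ∈ Ω i},
        (volume (Ω i.1)).toReal⁻¹ * ∫ w in Ω i.1, |g w|)) ^ pr
        ≤ ∑' i : ℕ, (Ω i).indicator (fun _ => Amax i ^ pr) z := by
      intro z
      set X := ∑' i : ℕ, (Ω i).indicator (fun _ => Amax i ^ pr) z with hX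
      have key : ENNReal.ofReal (⨆ i : {i : ℕ // z ∈ Ω i},
          (volume (Ω i.1)).toReal⁻¹ * ∫ w in Ω i.1, |g w|) ≤ X ^ (1/pr) := by
        rcases isEmpty_or_nonempty {i : ℕ // z ∈ Ω i} with hemp | hne
        · rw [Real.iSup_of_isEmpty]
          simp
        · have hle : ∀ i : {i : ℕ // z ∈ Ω i}, Amax i.1 ≤ X ^ (1/pr) := by
            intro i
            have hterm : Amax i.1 ^ pr ≤ X := by
              have hi : (Ω i.1).indicator (fun _ => Amax i.1 ^ pr) z = Amax i.1 ^ pr :=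
                Set.indicator_of_mem i.2 _
              rw [← hi]
              exact ENNReal.le_tsum i.1
            calc Amax i.1 = (Amax i.1 ^ pr) ^ (1/pr) := by
                  rw [one_div, ENNReal.rpow_rpow_inv hpr0.ne']
              _ ≤ X ^ (1/pr) :=
                  ENNReal.rpow_le_rpow hterm (div_nonneg zero_le_one hpr0.le)
          rcases eq_or_ne (X ^ (1/pr)) ∞ with hXt | hXt
          · rw [hXt]; exact le_top
          · refine ENNReal.ofReal_le_of_le_toReal ?_
            refine Real.iSup_le (fun i => ?_) ENNReal.toReal_nonneg
            exact (ENNReal.ofReal_le_iff_le_toReal hXt).mp (hle i)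
      calc (ENNReal.ofReal (⨆ i : {i : ℕ // z ∈ Ω i},
            (volume (Ω i.1)).toReal⁻¹ * ∫ w in Ω i.1, |g w|)) ^ pr
          ≤ (X ^ (1/pr)) ^ pr := ENNReal.rpow_le_rpow key hpr0.le
        _ = X := by rw [one_div, ENNReal.rpow_inv_rpow hpr0.ne']
    have hFnn : ∀ z : ℝ × ℝ, (0:ℝ) ≤ ⨆ i : {i : ℕ // z ∈ Ω i},
        (volume (Ω i.1)).toReal⁻¹ * ∫ w in Ω i.1, |g w| := fun z =>
      Real.iSup_nonneg fun i => mul_nonneg (inv_nonneg.mpr ENNReal.toReal_nonneg)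
        (integral_nonneg fun w => abs_nonneg _)
    rw [heLp, eLpNorm_eq_lintegral_rpow_enorm_toReal hp0 hptop]
    have hnorm : ∀ z : ℝ × ℝ, ((‖(⨆ i : {i : ℕ // z ∈ Ω i},
        (volume (Ω i.1)).toReal⁻¹ * ∫ w in Ω i.1, |g w|)‖₊ : ℝ≥0∞)) ^ (p.toReal)
        = (ENNReal.ofReal (⨆ i : {i : ℕ // z ∈ Ω i},
          (volume (Ω i.1)).toReal⁻¹ * ∫ w in Ω i.1, |g w|)) ^ pr := by
      intro z
      exact congrArg (· ^ pr) (Real.enorm_eq_ofReal (hFnn z))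
    calc (∫⁻ z, (‖(⨆ i : {i : ℕ // z ∈ Ω i},
          (volume (Ω i.1)).toReal⁻¹ * ∫ w in Ω i.1, |g w|)‖₊ : ℝ≥0∞) ^ p.toReal) ^ (1/p.toReal)
        ≤ (∑' i : ℕ, Amax i ^ pr * v i) ^ (1/pr) := by
          refine ENNReal.rpow_le_rpow ?_ (div_nonneg zero_le_one hpr0.le)
          calc ∫⁻ z, (‖(⨆ i : {i : ℕ // z ∈ Ω i},
                (volume (Ω i.1)).toReal⁻¹ * ∫ w in Ω i.1, |g w|)‖₊ : ℝ≥0∞) ^ p.toReal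
              ≤ ∫⁻ z, ∑' i : ℕ, (Ω i).indicator (fun _ => Amax i ^ pr) z := by
                refine lintegral_mono fun z => ?_
                rw [hnorm z]
                exact hpoint z
            _ = ∑' i : ℕ, ∫⁻ z, (Ω i).indicator (fun _ => Amax i ^ pr) z :=
                lintegral_tsum fun i =>
                  ((measurable_const.indicator (hmeas i)).aemeasurable)
            _ = ∑' i : ℕ, Amax i ^ pr * v i := by
                refine tsum_congr fun i => ?_
                rw [lintegral_indicator (hmeas i), MeasureTheory.setLIntegral_const]
      _ ≤ (K ^ pr * T) ^ (1/pr) :=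
          ENNReal.rpow_le_rpow hsum (div_nonneg zero_le_one hpr0.le)
      _ = K * T ^ (1/pr) := by
          rw [ENNReal.mul_rpow_of_nonneg _ _ (div_nonneg zero_le_one hpr0.le),
            one_div, ENNReal.rpow_rpow_inv hpr0.ne']


end
end

section
/- For functions f, g on ℝ² with finite rectangular Haar expansions, the bi-parameter square function of the mixed paraproduct π³_g(f) satisfies the pointwise bound S(π³_g f)(x,y) ≤ S₂M₁(f)(x,y) · M₂S₁(g)(x,y) for all (x,y) ∈ ℝ². -/
open MeasureTheory Set
open scoped ENNReal Classical

noncomputable section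

-- basics
lemma dlen_pos (p : ℤ × ℤ) : 0 < dlen p := zpow_pos (by norm_num) _

lemma meas_dyadicI (p : ℤ × ℤ) : MeasurableSet (dyadicI p) := measurableSet_Ico

lemma volume_dyadicI (p : ℤ × ℤ) : volume (dyadicI p) = ENNReal.ofReal (dlen p) := by
  rw [dyadicI, Real.volume_Ico]
  congr 1
  rw [dlen]; ring

lemma volume_dyadicI_toReal (p : ℤ × ℤ) : (volume (dyadicI p)).toReal = dlen p := by
  rw [volume_dyadicI, ENNReal.toReal_ofReal (dlen_pos p).le]

lemma volume_dyadicI_lt_top (p : ℤ × ℤ) : volume (dyadicI p) < ⊤ := by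
  rw [volume_dyadicI]; exact ENNReal.ofReal_lt_top

lemma indicator_integrable (p : ℤ × ℤ) : Integrable ((dyadicI p).indicator (1 : ℝ → ℝ)) := by
  rw [integrable_indicator_iff (meas_dyadicI p)]
  exact integrableOn_const (volume_dyadicI_lt_top p).ne

lemma dyadicI_disjoint {k n m : ℤ} (h : n ≠ m) {x : ℝ}
    (hx : x ∈ dyadicI (k, n)) : x ∉ dyadicI (k, m) := by
  intro hy
  simp only [dyadicI, mem_Ico] at hx hy
  have h2 : (0:ℝ) < 2 ^ k := zpow_pos (by norm_num) _
  rcases lt_or_gt_of_ne h with h' | h'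
  · have : (n:ℝ) + 1 ≤ m := by exact_mod_cast by omega
    nlinarith [hx.1, hx.2, hy.1, hy.2]
  · have : (m:ℝ) + 1 ≤ n := by exact_mod_cast by omega
    nlinarith [hx.1, hx.2, hy.1, hy.2]

/-- Nesting: smaller-scale dyadic interval is contained in or disjoint from larger-scale one. -/
lemma dyadic_nested {k n k' m : ℤ} (hk : k ≤ k') :
    dyadicI (k, n) ⊆ dyadicI (k', m) ∨ ∀ x ∈ dyadicI (k, n), x ∉ dyadicI (k', m) := by
  set M : ℤ := 2 ^ (k' - k).toNat with hM
  have hMR : ((M : ℝ)) = (2:ℝ) ^ (k' - k) := by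
    rw [hM]
    push_cast
    rw [← zpow_natCast (2:ℝ), Int.toNat_of_nonneg (by omega)]
  have h2 : (0:ℝ) < 2 ^ k := zpow_pos (by norm_num) _
  have hsplit : (2:ℝ) ^ k' = (M : ℝ) * 2 ^ k := by
    rw [hMR, ← zpow_add₀ (two_ne_zero)]; congr 1; omega
  by_cases h1 : n + 1 ≤ m * M
  · right
    intro x hx hy
    simp only [dyadicI, mem_Ico] at hx hy
    have : ((n:ℝ) + 1) * 2 ^ k ≤ (m * M : ℤ) * 2 ^ k := by
      apply mul_le_mul_of_nonneg_right _ h2.le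
      exact_mod_cast h1
    push_cast at this
    rw [hsplit] at hy
    nlinarith [hx.2, hy.1]
  · by_cases h2' : (m + 1) * M ≤ n
    · right
      intro x hx hy
      simp only [dyadicI, mem_Ico] at hx hy
      have : ((m+1) * M : ℤ) * (2:ℝ) ^ k ≤ (n:ℝ) * 2 ^ k := by
        apply mul_le_mul_of_nonneg_right _ h2.le
        exact_mod_cast h2'
      push_cast at this
      rw [hsplit] at hy
      nlinarith [hx.1, hy.2]
    · left
      push_neg at h1 h2'
      have hl : m * M ≤ n := by omega
      have hr : n + 1 ≤ (m + 1) * M := by omega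
      have hlR : (m : ℝ) * M ≤ n := by exact_mod_cast hl
      have hrR : (n : ℝ) + 1 ≤ ((m : ℝ) + 1) * M := by exact_mod_cast hr
      simp only [dyadicI]
      apply Ico_subset_Ico
      · rw [hsplit]; nlinarith
      · rw [hsplit]; nlinarith

lemma child_subset_left (p : ℤ × ℤ) : dyadicI (p.1 - 1, 2 * p.2) ⊆ dyadicI p := by
  simp only [dyadicI]
  have ht : (2:ℝ) ^ p.1 = 2 * 2 ^ (p.1 - 1) := by
    have h := zpow_add_one₀ (two_ne_zero : (2:ℝ) ≠ 0) (p.1 - 1)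
    rw [sub_add_cancel] at h
    rw [h]; ring
  have h2 : (0:ℝ) < 2 ^ (p.1 - 1) := zpow_pos (by norm_num) _
  apply Ico_subset_Ico <;> · push_cast; rw [ht]; nlinarith

lemma child_subset_right (p : ℤ × ℤ) : dyadicI (p.1 - 1, 2 * p.2 + 1) ⊆ dyadicI p := by
  simp only [dyadicI]
  have ht : (2:ℝ) ^ p.1 = 2 * 2 ^ (p.1 - 1) := by
    have h := zpow_add_one₀ (two_ne_zero : (2:ℝ) ≠ 0) (p.1 - 1)
    rw [sub_add_cancel] at h
    rw [h]; ring
  have h2 : (0:ℝ) < 2 ^ (p.1 - 1) := zpow_pos (by norm_num) _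
  apply Ico_subset_Ico <;> · push_cast; rw [ht]; nlinarith

lemma haar_support {p : ℤ × ℤ} {x : ℝ} (hx : x ∉ dyadicI p) : haar p x = 0 := by
  have h1 : x ∉ dyadicI (p.1 - 1, 2 * p.2) := fun h => hx (child_subset_left p h)
  have h2 : x ∉ dyadicI (p.1 - 1, 2 * p.2 + 1) := fun h => hx (child_subset_right p h)
  simp [haar, indicator_of_notMem h1, indicator_of_notMem h2]

lemma haar_bound (p : ℤ × ℤ) (x : ℝ) : |haar p x| ≤ (2:ℝ) ^ (-(p.1 : ℝ) / 2) := by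
  have hpos : (0:ℝ) < (2:ℝ) ^ (-(p.1 : ℝ) / 2) := Real.rpow_pos_of_pos (by norm_num) _
  unfold haar
  by_cases h1 : x ∈ dyadicI (p.1 - 1, 2 * p.2) <;>
    by_cases h2 : x ∈ dyadicI (p.1 - 1, 2 * p.2 + 1) <;>
      simp [h1, h2, abs_mul, abs_of_nonneg hpos.le, hpos.le]

lemma haar_measurable (p : ℤ × ℤ) : Measurable (haar p) := by
  apply Measurable.const_mul
  exact ((measurable_one.indicator (meas_dyadicI _)).sub (measurable_one.indicator (meas_dyadicI _)))

lemma haar_integrable (p : ℤ × ℤ) : Integrable (haar p) := by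
  apply Integrable.const_mul
  exact (indicator_integrable _).sub (indicator_integrable _)

lemma integral_haar (p : ℤ × ℤ) : ∫ x, haar p x = 0 := by
  simp only [haar]
  rw [integral_const_mul, integral_sub (indicator_integrable _) (indicator_integrable _),
    integral_indicator_one (meas_dyadicI _), integral_indicator_one (meas_dyadicI _),
    measureReal_def, measureReal_def, volume_dyadicI_toReal, volume_dyadicI_toReal]
  simp [dlen]

lemma children_disjoint (p : ℤ × ℤ) {x : ℝ} (hx : x ∈ dyadicI (p.1 - 1, 2 * p.2)) :
    x ∉ dyadicI (p.1 - 1, 2 * p.2 + 1) := dyadicI_disjoint (by omega) hx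

lemma haar_eq_on_left {p : ℤ × ℤ} {x : ℝ} (hx : x ∈ dyadicI (p.1 - 1, 2 * p.2)) :
    haar p x = (2:ℝ) ^ (-(p.1 : ℝ) / 2) := by
  simp [haar, indicator_of_mem hx, indicator_of_notMem (children_disjoint p hx)]

lemma haar_eq_on_right {p : ℤ × ℤ} {x : ℝ} (hx : x ∈ dyadicI (p.1 - 1, 2 * p.2 + 1)) :
    haar p x = -((2:ℝ) ^ (-(p.1 : ℝ) / 2)) := by
  have h1 : x ∉ dyadicI (p.1 - 1, 2 * p.2) := fun h => children_disjoint p h hx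
  simp [haar, indicator_of_mem hx, indicator_of_notMem h1]

lemma haar_eq_zero_off {p : ℤ × ℤ} {x : ℝ} (h1 : x ∉ dyadicI (p.1 - 1, 2 * p.2))
    (h2 : x ∉ dyadicI (p.1 - 1, 2 * p.2 + 1)) : haar p x = 0 := by
  simp [haar, indicator_of_notMem h1, indicator_of_notMem h2]

lemma two_zpow_split (k : ℤ) : (2:ℝ) ^ k = 2 * 2 ^ (k - 1) := by
  have h := zpow_add_one₀ (two_ne_zero : (2:ℝ) ≠ 0) (k - 1)
  rw [sub_add_cancel] at h
  rw [h]; ring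

lemma rpow_half_sq (k : ℤ) :
    (2:ℝ) ^ (-(k : ℝ) / 2) * (2:ℝ) ^ (-(k : ℝ) / 2) * (2:ℝ) ^ k = 1 := by
  rw [← Real.rpow_intCast 2 k, ← Real.rpow_add (by norm_num), ← Real.rpow_add (by norm_num)]
  norm_num

lemma haar_self (p : ℤ × ℤ) : ∫ x, haar p x * haar p x = 1 := by
  set e : ℝ := (2:ℝ) ^ (-(p.1 : ℝ) / 2) with he
  have key : ∀ x, haar p x * haar p x
      = e * e * ((dyadicI (p.1 - 1, 2 * p.2)).indicator 1 x
        + (dyadicI (p.1 - 1, 2 * p.2 + 1)).indicator 1 x) := by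
    intro x
    by_cases h1 : x ∈ dyadicI (p.1 - 1, 2 * p.2)
    · rw [haar_eq_on_left h1, indicator_of_mem h1,
        indicator_of_notMem (children_disjoint p h1)]
      simp [he]
    · by_cases h2 : x ∈ dyadicI (p.1 - 1, 2 * p.2 + 1)
      · rw [haar_eq_on_right h2, indicator_of_mem h2, indicator_of_notMem h1]
        simp [he]
      · rw [haar_eq_zero_off h1 h2, indicator_of_notMem h1, indicator_of_notMem h2]
        simp
  rw [show (fun x => haar p x * haar p x) = fun x =>
      e * e * ((dyadicI (p.1 - 1, 2 * p.2)).indicator 1 x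
        + (dyadicI (p.1 - 1, 2 * p.2 + 1)).indicator 1 x) from funext key]
  rw [integral_const_mul, integral_add (indicator_integrable _) (indicator_integrable _),
    integral_indicator_one (meas_dyadicI _), integral_indicator_one (meas_dyadicI _),
    measureReal_def, measureReal_def, volume_dyadicI_toReal, volume_dyadicI_toReal]
  have : dlen (p.1 - 1, 2 * p.2) + dlen (p.1 - 1, 2 * p.2 + 1) = (2:ℝ) ^ p.1 := by
    simp only [dlen]
    rw [two_zpow_split p.1]; ring
  rw [this, rpow_half_sq]

lemma haar_ortho_lt {p p' : ℤ × ℤ} (h : p.1 < p'.1) : ∫ x, haar p x * haar p' x = 0 := by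
  set e : ℝ := (2:ℝ) ^ (-(p'.1 : ℝ) / 2) with he
  have hk : p.1 ≤ p'.1 - 1 := by omega
  have key : ∃ c : ℝ, ∀ x, haar p x * haar p' x = c * haar p x := by
    obtain ⟨k, n⟩ := p
    rcases dyadic_nested (n := n) (m := 2 * p'.2) hk with hL | hL
    · refine ⟨e, fun x => ?_⟩
      by_cases hx : x ∈ dyadicI (k, n)
      · rw [haar_eq_on_left (p := p') (hL hx)]; ring
      · rw [haar_support hx]; ring
    · rcases dyadic_nested (n := n) (m := 2 * p'.2 + 1) hk with hR | hR
      · refine ⟨-e, fun x => ?_⟩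
        by_cases hx : x ∈ dyadicI (k, n)
        · rw [haar_eq_on_right (p := p') (hR hx)]; ring
        · rw [haar_support hx]; ring
      · refine ⟨0, fun x => ?_⟩
        by_cases hx : x ∈ dyadicI (k, n)
        · rw [haar_eq_zero_off (hL x hx) (hR x hx)]; ring
        · rw [haar_support hx]; ring
  obtain ⟨c, hc⟩ := key
  rw [show (fun x => haar p x * haar p' x) = fun x => c * haar p x from funext hc]
  rw [integral_const_mul, integral_haar, mul_zero]

lemma haar_mul_integral (p p' : ℤ × ℤ) :
    ∫ x, haar p x * haar p' x = if p = p' then 1 else 0 := by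
  by_cases hpp : p = p'
  · rw [if_pos hpp, hpp, haar_self]
  · rw [if_neg hpp]
    rcases lt_trichotomy p.1 p'.1 with h | h | h
    · exact haar_ortho_lt h
    · -- same scale, different n
      obtain ⟨k, n⟩ := p
      obtain ⟨k', n'⟩ := p'
      simp only at h
      subst h
      have hn : n ≠ n' := by simpa using hpp
      have : ∀ x, haar (k, n) x * haar (k, n') x = 0 := by
        intro x
        by_cases hx : x ∈ dyadicI (k, n)
        · rw [haar_support (dyadicI_disjoint hn hx)]; ring
        · rw [haar_support hx]; ring
      rw [show (fun x => haar (k, n) x * haar (k, n') x) = fun _ => (0:ℝ) from funext this]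
      simp
    · have : ∀ x, haar p x * haar p' x = haar p' x * haar p x := fun x => mul_comm _ _
      rw [show (fun x => haar p x * haar p' x) = fun x => haar p' x * haar p x from funext this]
      exact haar_ortho_lt h


lemma haar_mul_integrable (p p' : ℤ × ℤ) : Integrable (fun x => haar p x * haar p' x) := by
  have h := (haar_integrable p').bdd_mul (haar_measurable p).aestronglyMeasurable
    (Filter.Eventually.of_forall fun x => by simpa using haar_bound p x)
  simpa [Pi.mul_def] using h

lemma haarR_rearrange (r r' : RectIx) (z : ℝ × ℝ) :
    haarR r z * haarR r' z = (haar r.1 z.1 * haar r'.1 z.1) * (haar r.2 z.2 * haar r'.2 z.2) := by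
  simp only [haarR]; ring

lemma haarR_mul_integrable (r r' : RectIx) :
    Integrable (fun z : ℝ × ℝ => haarR r z * haarR r' z) := by
  rw [show (fun z : ℝ × ℝ => haarR r z * haarR r' z)
      = fun z : ℝ × ℝ => (haar r.1 z.1 * haar r'.1 z.1) * (haar r.2 z.2 * haar r'.2 z.2)
    from funext (haarR_rearrange r r'), Measure.volume_eq_prod]
  exact (haar_mul_integrable _ _).mul_prod (haar_mul_integrable _ _)

lemma haarR_mul_integral (r r' : RectIx) :
    ∫ z : ℝ × ℝ, haarR r z * haarR r' z = if r = r' then 1 else 0 := by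
  rw [show (fun z : ℝ × ℝ => haarR r z * haarR r' z)
      = fun z : ℝ × ℝ => (haar r.1 z.1 * haar r'.1 z.1) * (haar r.2 z.2 * haar r'.2 z.2)
    from funext (haarR_rearrange r r'), Measure.volume_eq_prod]
  rw [integral_prod_mul (μ := (volume : Measure ℝ)) (ν := (volume : Measure ℝ))
    (fun x => haar r.1 x * haar r'.1 x) (fun y => haar r.2 y * haar r'.2 y),
    haar_mul_integral, haar_mul_integral]
  by_cases h1 : r.1 = r'.1 <;> by_cases h2 : r.2 = r'.2 <;>
    simp [h1, h2, Prod.ext_iff]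

lemma haarCoefR_finsum (s : Finset RectIx) (c : RectIx → ℝ) (r : RectIx) :
    haarCoefR (fun z => ∑ r' ∈ s, c r' * haarR r' z) r = if r ∈ s then c r else 0 := by
  unfold haarCoefR
  rw [show (fun z : ℝ × ℝ => (∑ r' ∈ s, c r' * haarR r' z) * haarR r z)
      = fun z : ℝ × ℝ => ∑ r' ∈ s, c r' * (haarR r' z * haarR r z) from funext fun z => by
        rw [Finset.sum_mul]; exact Finset.sum_congr rfl fun r' _ => by ring]
  rw [integral_finset_sum _ fun r' _ => (haarR_mul_integrable r' r).const_mul (c r')]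
  refine Eq.trans (Finset.sum_congr rfl fun r' hr' => ?_) (Finset.sum_ite_eq' s r c)
  rw [integral_const_mul, haarR_mul_integral]
  by_cases h : r' = r <;> simp [h]

lemma coefSnd_finsum (s : Finset RectIx) (c : RectIx → ℝ) (q : ℤ × ℤ) (x : ℝ) :
    coefSnd (fun z => ∑ r ∈ s, c r * haarR r z) q x
      = ∑ r ∈ s, if r.2 = q then c r * haar r.1 x else 0 := by
  unfold coefSnd
  rw [show (fun y : ℝ => (∑ r ∈ s, c r * haarR r (x, y)) * haar q y)
      = fun y : ℝ => ∑ r ∈ s, (c r * haar r.1 x) * (haar r.2 y * haar q y) from funext fun y => by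
        rw [Finset.sum_mul]; exact Finset.sum_congr rfl fun r _ => by simp [haarR]; ring]
  rw [integral_finset_sum _ fun r _ => (haar_mul_integrable r.2 q).const_mul _]
  refine Finset.sum_congr rfl fun r _ => ?_
  rw [integral_const_mul, haar_mul_integral]
  by_cases h : r.2 = q <;> simp [h]

lemma coefFst_finsum (s : Finset RectIx) (c : RectIx → ℝ) (p : ℤ × ℤ) (y : ℝ) :
    coefFst (fun z => ∑ r ∈ s, c r * haarR r z) p y
      = ∑ r ∈ s, if r.1 = p then c r * haar r.2 y else 0 := by
  unfold coefFst
  rw [show (fun x : ℝ => (∑ r ∈ s, c r * haarR r (x, y)) * haar p x)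
      = fun x : ℝ => ∑ r ∈ s, (c r * haar r.2 y) * (haar r.1 x * haar p x) from funext fun x => by
        rw [Finset.sum_mul]; exact Finset.sum_congr rfl fun r _ => by simp [haarR]; ring]
  rw [integral_finset_sum _ fun r _ => (haar_mul_integrable r.1 p).const_mul _]
  refine Finset.sum_congr rfl fun r _ => ?_
  rw [integral_const_mul, haar_mul_integral]
  by_cases h : r.1 = p <;> simp [h]

lemma avgI_eq_zero {u : ℝ → ℝ} (hu : ∀ x, u x = 0) (p : ℤ × ℤ) : avgI u p = 0 := by
  rw [avgI, show u = fun _ => (0:ℝ) from funext hu]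
  simp

lemma abs_avgI_le {u : ℝ → ℝ} {C : ℝ} (hm : Measurable u) (hu : ∀ x, |u x| ≤ C)
    (p : ℤ × ℤ) : |avgI u p| ≤ C := by
  have hC : 0 ≤ C := le_trans (abs_nonneg _) (hu 0)
  have hnorm : ‖∫ x in dyadicI p, u x‖ ≤ C * (volume (dyadicI p)).toReal := by
    refine norm_setIntegral_le_of_norm_le_const (volume_dyadicI_lt_top p)
      (fun x _ => by simpa using hu x)
  rw [volume_dyadicI_toReal] at hnorm
  rw [avgI, abs_mul, abs_of_pos (inv_pos.2 (dlen_pos p))]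
  calc (dlen p)⁻¹ * |∫ x in dyadicI p, u x| ≤ (dlen p)⁻¹ * (C * dlen p) := by
        exact mul_le_mul_of_nonneg_left (by simpa using hnorm) (inv_pos.2 (dlen_pos p)).le
    _ = C := by rw [mul_comm C, ← mul_assoc, inv_mul_cancel₀ (dlen_pos p).ne', one_mul]

lemma mem_dyadicI_floor (x : ℝ) : x ∈ dyadicI (0, ⌊x⌋) := by
  simp only [dyadicI, mem_Ico, zpow_zero, mul_one]
  exact ⟨Int.floor_le x, Int.lt_floor_add_one x⟩

instance dyadicI_nonempty (x : ℝ) : Nonempty {p : ℤ × ℤ // x ∈ dyadicI p} :=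
  ⟨⟨(0, ⌊x⌋), mem_dyadicI_floor x⟩⟩

lemma avgI_le_dyadMax {u : ℝ → ℝ} {C : ℝ} (hm : Measurable u) (hu : ∀ x, |u x| ≤ C)
    {x : ℝ} {p : ℤ × ℤ} (hp : x ∈ dyadicI p) : |avgI u p| ≤ dyadMax u x := by
  refine le_ciSup (f := fun p : {p : ℤ × ℤ // x ∈ dyadicI p} => |avgI u p.1|) ?_ ⟨p, hp⟩
  exact ⟨C, fun v hv => by obtain ⟨p', rfl⟩ := hv; exact abs_avgI_le hm hu p'.1⟩

lemma dyadMax_eq_zero {u : ℝ → ℝ} (hu : ∀ x, u x = 0) (x : ℝ) : dyadMax u x = 0 := by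
  rw [dyadMax]
  have : ∀ p : {p : ℤ × ℤ // x ∈ dyadicI p}, |avgI u p.1| = 0 := fun p => by
    rw [avgI_eq_zero hu, abs_zero]
  rw [show (fun p : {p : ℤ × ℤ // x ∈ dyadicI p} => |avgI u p.1|) = fun _ => (0:ℝ)
    from funext this]
  exact ciSup_const

lemma indicator_prod (r : RectIx) (z : ℝ × ℝ) :
    (dyadicR r).indicator (1 : ℝ × ℝ → ℝ) z
      = (dyadicI r.1).indicator (1 : ℝ → ℝ) z.1 * (dyadicI r.2).indicator (1 : ℝ → ℝ) z.2 := by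
  simp only [dyadicR]
  by_cases h1 : z.1 ∈ dyadicI r.1 <;> by_cases h2 : z.2 ∈ dyadicI r.2 <;>
    simp [Set.indicator_apply, Set.mem_prod, h1, h2]

/-- Pointwise bound `S(π³_g f) ≤ S₂M₁(f) · M₂S₁(g)` for the mixed
bi-parameter paraproduct `π³_g`. -/
theorem sq_pi3_le_S2M1_mul_M2S1 (f g : ℝ × ℝ → ℝ)
    (hf : FinHaar2 f) (hg : FinHaar2 g) (z : ℝ × ℝ) :
    sqR (pi3 g f) z ≤ S2M1 f z * M2S1 g z := by
  obtain ⟨sf, cf, hfe⟩ := hf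
  obtain ⟨sg, cg, hge⟩ := hg
  set Q : Finset (ℤ × ℤ) := sf.image Prod.snd with hQ
  set P : Finset (ℤ × ℤ) := sg.image Prod.fst with hP
  have hcoefSnd : ∀ q x', coefSnd f q x' = ∑ r ∈ sf, if r.2 = q then cf r * haar r.1 x' else 0 :=
    fun q x' => by rw [hfe]; exact coefSnd_finsum sf cf q x'
  have hcoefFst : ∀ p y', coefFst g p y' = ∑ r ∈ sg, if r.1 = p then cg r * haar r.2 y' else 0 :=
    fun p y' => by rw [hge]; exact coefFst_finsum sg cg p y'
  have hSndZero : ∀ q ∉ Q, ∀ x', coefSnd f q x' = 0 := by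
    intro q hq x'
    rw [hcoefSnd]
    refine Finset.sum_eq_zero fun r hr => if_neg fun h => ?_
    exact hq (h ▸ Finset.mem_image_of_mem Prod.snd hr)
  have hFstZero : ∀ p ∉ P, ∀ y', coefFst g p y' = 0 := by
    intro p hp y'
    rw [hcoefFst]
    refine Finset.sum_eq_zero fun r hr => if_neg fun h => ?_
    exact hp (h ▸ Finset.mem_image_of_mem Prod.fst hr)
  have hSndMeas : ∀ q, Measurable (coefSnd f q) := by
    intro q
    rw [show coefSnd f q = fun x' => ∑ r ∈ sf, if r.2 = q then cf r * haar r.1 x' else 0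
      from funext (hcoefSnd q)]
    refine Finset.measurable_sum _ fun r _ => ?_
    by_cases h : r.2 = q
    · simp only [if_pos h]; exact (haar_measurable r.1).const_mul (cf r)
    · simp only [if_neg h]; exact measurable_const
  have hFstMeas : ∀ p, Measurable (coefFst g p) := by
    intro p
    rw [show coefFst g p = fun y' => ∑ r ∈ sg, if r.1 = p then cg r * haar r.2 y' else 0
      from funext (hcoefFst p)]
    refine Finset.measurable_sum _ fun r _ => ?_
    by_cases h : r.1 = p
    · simp only [if_pos h]; exact (haar_measurable r.2).const_mul (cg r)
    · simp only [if_neg h]; exact measurable_const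
  set Bf : ℝ := ∑ r ∈ sf, |cf r| * (2:ℝ) ^ (-(r.1.1 : ℝ) / 2) with hBf
  set Bg : ℝ := ∑ r ∈ sg, |cg r| * (2:ℝ) ^ (-(r.2.1 : ℝ) / 2) with hBg
  have hBfBound : ∀ q x', |coefSnd f q x'| ≤ Bf := by
    intro q x'
    rw [hcoefSnd, hBf]
    refine le_trans (Finset.abs_sum_le_sum_abs _ _) (Finset.sum_le_sum fun r _ => ?_)
    by_cases h : r.2 = q
    · rw [if_pos h, abs_mul]
      exact mul_le_mul_of_nonneg_left (haar_bound r.1 x') (abs_nonneg _)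
    · rw [if_neg h, abs_zero]
      positivity
  have hBgBound : ∀ p y', |coefFst g p y'| ≤ Bg := by
    intro p y'
    rw [hcoefFst, hBg]
    refine le_trans (Finset.abs_sum_le_sum_abs _ _) (Finset.sum_le_sum fun r _ => ?_)
    by_cases h : r.1 = p
    · rw [if_pos h, abs_mul]
      exact mul_le_mul_of_nonneg_left (haar_bound r.2 y') (abs_nonneg _)
    · rw [if_neg h, abs_zero]
      positivity
  set a : RectIx → ℝ := fun r => avgI (coefSnd f r.2) r.1 * avgI (coefFst g r.1) r.2 with ha
  have haZero : ∀ r ∉ P ×ˢ Q, a r = 0 := by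
    intro r hr
    rw [Finset.mem_product] at hr
    rcases not_and_or.1 hr with h | h
    · rw [ha]
      simp only
      rw [avgI_eq_zero (hFstZero r.1 h), mul_zero]
    · rw [ha]
      simp only
      rw [avgI_eq_zero (hSndZero r.2 h), zero_mul]
  have hpi3 : pi3 g f = fun w => ∑ r ∈ P ×ˢ Q, a r * haarR r w := by
    funext w
    rw [pi3, show (fun r : RectIx =>
        avgI (coefSnd f r.2) r.1 * avgI (coefFst g r.1) r.2 * haarR r w)
      = fun r => a r * haarR r w from by simp only [ha]]
    exact tsum_eq_sum fun r hr => by rw [haZero r hr, zero_mul]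
  have hcoef : ∀ r, haarCoefR (pi3 g f) r = a r := by
    intro r
    rw [hpi3, haarCoefR_finsum]
    by_cases h : r ∈ P ×ˢ Q
    · rw [if_pos h]
    · rw [if_neg h, haZero r h]
  have hsq : sqR (pi3 g f) z
      = Real.sqrt (∑ r ∈ P ×ˢ Q, a r ^ 2 * (rlen r)⁻¹ * (dyadicR r).indicator 1 z) := by
    rw [sqR, show (fun r : RectIx =>
        haarCoefR (pi3 g f) r ^ 2 * (rlen r)⁻¹ * (dyadicR r).indicator 1 z)
      = fun r => a r ^ 2 * (rlen r)⁻¹ * (dyadicR r).indicator 1 z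
      from funext fun r => by rw [hcoef r]]
    congr 1
    refine tsum_eq_sum fun r hr => ?_
    rw [haZero r hr]
    simp
  set Mterm : (ℤ × ℤ) → ℝ :=
    fun q => dyadMax (coefSnd f q) z.1 ^ 2 * (dlen q)⁻¹ * (dyadicI q).indicator 1 z.2 with hMt
  have hMtnn : ∀ q, 0 ≤ Mterm q := fun q => by
    rw [hMt]
    exact mul_nonneg (mul_nonneg (sq_nonneg _) (inv_nonneg.2 (dlen_pos q).le))
      (Set.indicator_nonneg (fun _ _ => zero_le_one) _)
  have hS2 : S2M1 f z = Real.sqrt (∑ q ∈ Q, Mterm q) := by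
    rw [S2M1]
    congr 1
    refine tsum_eq_sum fun q hq => ?_
    rw [dyadMax_eq_zero (hSndZero q hq)]
    simp
  have hSsum : ∑ q ∈ Q, Mterm q = (S2M1 f z) ^ 2 := by
    rw [hS2, Real.sq_sqrt (Finset.sum_nonneg fun q _ => hMtnn q)]
  set Gterm : (ℤ × ℤ) → (ℤ × ℤ) → ℝ :=
    fun p q => avgI (coefFst g p) q ^ 2 * (dlen p)⁻¹ * (dyadicI p).indicator 1 z.1 with hGt
  have hGnn : ∀ p q, 0 ≤ Gterm p q := fun p q => by
    rw [hGt]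
    exact mul_nonneg (mul_nonneg (sq_nonneg _) (inv_nonneg.2 (dlen_pos p).le))
      (Set.indicator_nonneg (fun _ _ => zero_le_one) _)
  have hGsum : ∀ q : ℤ × ℤ,
      (∑' p : ℤ × ℤ, avgI (coefFst g p) q ^ 2 * (dlen p)⁻¹ * (dyadicI p).indicator 1 z.1)
        = ∑ p ∈ P, Gterm p q := by
    intro q
    refine tsum_eq_sum fun p hp => ?_
    rw [avgI_eq_zero (hFstZero p hp)]
    simp
  have hGbound : ∀ p q, Gterm p q ≤ Bg ^ 2 * (dlen p)⁻¹ := by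
    intro p q
    have h1 : avgI (coefFst g p) q ^ 2 ≤ Bg ^ 2 := by
      rw [← sq_abs (avgI _ _)]
      exact pow_le_pow_left₀ (abs_nonneg _) (abs_avgI_le (hFstMeas p) (hBgBound p) q) 2
    have hind : (dyadicI p).indicator (1 : ℝ → ℝ) z.1 ≤ 1 := by
      by_cases h : z.1 ∈ dyadicI p <;> simp [h]
    calc Gterm p q ≤ Bg ^ 2 * (dlen p)⁻¹ * 1 := by
          rw [hGt]
          exact mul_le_mul (mul_le_mul_of_nonneg_right h1 (inv_nonneg.2 (dlen_pos p).le)) hind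
            (Set.indicator_nonneg (fun _ _ => zero_le_one) _)
            (mul_nonneg (sq_nonneg _) (inv_nonneg.2 (dlen_pos p).le))
      _ = Bg ^ 2 * (dlen p)⁻¹ := mul_one _
  have hM2S1nn : 0 ≤ M2S1 g z := by
    rw [M2S1]
    exact Real.iSup_nonneg fun _ => Real.sqrt_nonneg _
  have hGle : ∀ q, z.2 ∈ dyadicI q → ∑ p ∈ P, Gterm p q ≤ (M2S1 g z) ^ 2 := by
    intro q hy
    have hsqrtle : Real.sqrt (∑ p ∈ P, Gterm p q) ≤ M2S1 g z := by
      rw [M2S1]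
      have hb : BddAbove (Set.range fun q' : {q' : ℤ × ℤ // z.2 ∈ dyadicI q'} =>
          Real.sqrt (∑' p : ℤ × ℤ,
            avgI (coefFst g p) q'.1 ^ 2 * (dlen p)⁻¹ * (dyadicI p).indicator 1 z.1)) := by
        refine ⟨Real.sqrt (∑ p ∈ P, Bg ^ 2 * (dlen p)⁻¹), ?_⟩
        rintro v ⟨q', rfl⟩
        apply Real.sqrt_le_sqrt
        rw [hGsum q'.1]
        exact Finset.sum_le_sum fun p _ => hGbound p q'.1
      have := le_ciSup hb ⟨q, hy⟩
      rwa [hGsum q] at this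
    have hnn : 0 ≤ ∑ p ∈ P, Gterm p q := Finset.sum_nonneg fun p _ => hGnn p q
    calc ∑ p ∈ P, Gterm p q = Real.sqrt (∑ p ∈ P, Gterm p q) ^ 2 := (Real.sq_sqrt hnn).symm
      _ ≤ (M2S1 g z) ^ 2 := pow_le_pow_left₀ (Real.sqrt_nonneg _) hsqrtle 2
  have hterm : ∀ r ∈ P ×ˢ Q, a r ^ 2 * (rlen r)⁻¹ * (dyadicR r).indicator 1 z
      ≤ Mterm r.2 * Gterm r.1 r.2 := by
    intro r _
    rw [indicator_prod]
    by_cases hx : z.1 ∈ dyadicI r.1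
    · have havg : avgI (coefSnd f r.2) r.1 ^ 2 ≤ dyadMax (coefSnd f r.2) z.1 ^ 2 := by
        rw [← sq_abs (avgI _ _)]
        refine pow_le_pow_left₀ (abs_nonneg _)
          (avgI_le_dyadMax (hSndMeas r.2) (hBfBound r.2) hx) 2
      rw [ha, hMt, hGt]
      simp only
      rw [rlen]
      have key : avgI (coefSnd f r.2) r.1 ^ 2 * avgI (coefFst g r.1) r.2 ^ 2
            * ((dlen r.1)⁻¹ * (dlen r.2)⁻¹)
            * ((dyadicI r.1).indicator 1 z.1 * (dyadicI r.2).indicator 1 z.2)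
          = (avgI (coefSnd f r.2) r.1 ^ 2 * (dlen r.2)⁻¹ * (dyadicI r.2).indicator 1 z.2)
            * (avgI (coefFst g r.1) r.2 ^ 2 * (dlen r.1)⁻¹ * (dyadicI r.1).indicator 1 z.1) := by
        ring
      calc (avgI (coefSnd f r.2) r.1 * avgI (coefFst g r.1) r.2) ^ 2
            * (dlen r.1 * dlen r.2)⁻¹
            * ((dyadicI r.1).indicator 1 z.1 * (dyadicI r.2).indicator 1 z.2)
          = (avgI (coefSnd f r.2) r.1 ^ 2 * (dlen r.2)⁻¹ * (dyadicI r.2).indicator 1 z.2)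
            * (avgI (coefFst g r.1) r.2 ^ 2 * (dlen r.1)⁻¹ * (dyadicI r.1).indicator 1 z.1) := by
            rw [← key, mul_pow, mul_inv]
        _ ≤ (dyadMax (coefSnd f r.2) z.1 ^ 2 * (dlen r.2)⁻¹ * (dyadicI r.2).indicator 1 z.2)
            * (avgI (coefFst g r.1) r.2 ^ 2 * (dlen r.1)⁻¹ * (dyadicI r.1).indicator 1 z.1) := by
            refine mul_le_mul_of_nonneg_right ?_ ?_
            · refine mul_le_mul_of_nonneg_right
                (mul_le_mul_of_nonneg_right havg (inv_nonneg.2 (dlen_pos r.2).le))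
                (Set.indicator_nonneg (fun _ _ => zero_le_one) _)
            · exact mul_nonneg (mul_nonneg (sq_nonneg _) (inv_nonneg.2 (dlen_pos r.1).le))
                (Set.indicator_nonneg (fun _ _ => zero_le_one) _)
    · rw [indicator_of_notMem hx]
      have h0 : a r ^ 2 * (rlen r)⁻¹ * ((0:ℝ) * (dyadicI r.2).indicator 1 z.2) = 0 := by ring
      rw [h0]
      exact mul_nonneg (hMtnn r.2) (hGnn r.1 r.2)
  have hmain : ∑ r ∈ P ×ˢ Q, a r ^ 2 * (rlen r)⁻¹ * (dyadicR r).indicator 1 z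
      ≤ (S2M1 f z) ^ 2 * (M2S1 g z) ^ 2 := by
    calc ∑ r ∈ P ×ˢ Q, a r ^ 2 * (rlen r)⁻¹ * (dyadicR r).indicator 1 z
        ≤ ∑ r ∈ P ×ˢ Q, Mterm r.2 * Gterm r.1 r.2 := Finset.sum_le_sum hterm
      _ = ∑ p ∈ P, ∑ q ∈ Q, Mterm q * Gterm p q := by rw [Finset.sum_product]
      _ = ∑ q ∈ Q, ∑ p ∈ P, Mterm q * Gterm p q := Finset.sum_comm
      _ = ∑ q ∈ Q, Mterm q * ∑ p ∈ P, Gterm p q :=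
          Finset.sum_congr rfl fun q _ => (Finset.mul_sum _ _ _).symm
      _ ≤ ∑ q ∈ Q, Mterm q * (M2S1 g z) ^ 2 := by
          refine Finset.sum_le_sum fun q _ => ?_
          by_cases hy : z.2 ∈ dyadicI q
          · exact mul_le_mul_of_nonneg_left (hGle q hy) (hMtnn q)
          · have hz : Mterm q = 0 := by
              rw [hMt]
              simp only
              rw [indicator_of_notMem hy, mul_zero]
            rw [hz, zero_mul, zero_mul]
      _ = (∑ q ∈ Q, Mterm q) * (M2S1 g z) ^ 2 := (Finset.sum_mul _ _ _).symm
      _ = (S2M1 f z) ^ 2 * (M2S1 g z) ^ 2 := by rw [hSsum]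
  rw [hsq]
  have hS2nn : 0 ≤ S2M1 f z := by rw [S2M1]; exact Real.sqrt_nonneg _
  calc Real.sqrt (∑ r ∈ P ×ˢ Q, a r ^ 2 * (rlen r)⁻¹ * (dyadicR r).indicator 1 z)
      ≤ Real.sqrt ((S2M1 f z * M2S1 g z) ^ 2) := Real.sqrt_le_sqrt (by nlinarith [hmain])
    _ = S2M1 f z * M2S1 g z := Real.sqrt_sq (mul_nonneg hS2nn hM2S1nn)

end
end
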